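/- arXiv:2012.08480 — 4 statements merged into one kernel-verified Lean document; each statement's English description precedes it below -/
import Mathlib

section
/- Let π, P, δ ∈ A = F_q[t] with P monic irreducible of degree d, gcd(π,P)=1, δ | π, gcd(δ, π/δ)=1. Choose α, β ∈ A with α(π/δ)P² + βδ = 1. Then: (a) the map Q ↦ Q' sending Q (with deg Q < d) to the unique Q' with deg Q' < d and Q ≡ βQ' mod P is a bijection on {Q ∈ A : deg Q < d}; (b) for each such Q, the matrix identity [[1,Q],[0,P]] · [[βδ, −αP],[πP, δ]] = [[δ(β + (π/δ)PQ), δ(Q−βQ')/P − πQQ' − α],[πP², δ(1 − (π/δ)PQ')]] · [[1,Q'],[0,P]] holds, with all entries of the first matrix on the right in A, and that matrix has determinant δ and is an Atkin–Lehner matrix W_{(δ)}^{(π)}. -/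
open Matrix

noncomputable section

/-- `Γ₀(ν)`: matrices over `F_q[t]` with unit determinant whose lower-left entry
is divisible by `ν`. -/
def Gamma0 {Fq : Type} [Field Fq] (ν : Polynomial Fq) :
    Set (Matrix (Fin 2) (Fin 2) (Polynomial Fq)) :=
  {γ | IsUnit γ.det ∧ ν ∣ γ 1 0}

/-- Möbius (fractional linear) action of a matrix over `F_q[t]` on `C_∞`. -/
def moeb {Fq Coo : Type} [Field Fq] [Field Coo] (ι : Polynomial Fq →+* Coo)
    (M : Matrix (Fin 2) (Fin 2) (Polynomial Fq)) (z : Coo) : Coo :=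
  (ι (M 0 0) * z + ι (M 0 1)) / (ι (M 1 0) * z + ι (M 1 1))

/-- Weight-`k`, type-`m` slash operator. -/
def slash {Fq Coo : Type} [Field Fq] [Field Coo] (ι : Polynomial Fq →+* Coo)
    (k m : ℤ) (M : Matrix (Fin 2) (Fin 2) (Polynomial Fq)) (f : Coo → Coo) : Coo → Coo :=
  fun z => f (moeb ι M z) * ι M.det ^ m * (ι (M 1 0) * z + ι (M 1 1)) ^ (-k)

/-- Weak modularity: invariance of `f` under the slash action of `Γ₀(ν)`. -/
def IsWeakModular {Fq Coo : Type} [Field Fq] [Field Coo] (ι : Polynomial Fq →+* Coo)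
    (k m : ℤ) (ν : Polynomial Fq) (f : Coo → Coo) : Prop :=
  ∀ γ ∈ Gamma0 ν, slash ι k m γ f = f

/-- The operator `U_p`: `U_P(f) = P^{k-m} Σ_{deg Q < deg P} f|_{k,m}[[1,Q],[0,P]]`,
where the sum over polynomials `Q` of degree `< d = deg P` is indexed by their
coefficient tuples. -/
def heckeU {Fq Coo : Type} [Field Fq] [Fintype Fq] [Field Coo] (ι : Polynomial Fq →+* Coo)
    (k m : ℤ) (P : Polynomial Fq) (f : Coo → Coo) : Coo → Coo :=
  fun z => ι P ^ (k - m) *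
    ∑ c : Fin P.natDegree → Fq,
      slash ι k m
        !![1, ∑ i : Fin P.natDegree, Polynomial.C (c i) * Polynomial.X ^ (i : ℕ); 0, P] f z

/-- The Hecke operator `T_p` for `p = (P)` prime to the level. -/
def heckeT {Fq Coo : Type} [Field Fq] [Fintype Fq] [Field Coo] (ι : Polynomial Fq →+* Coo)
    (k m : ℤ) (P : Polynomial Fq) (f : Coo → Coo) : Coo → Coo :=
  fun z => ι P ^ (k - m) * slash ι k m !![P, 0; 0, 1] f z + heckeU ι k m P f z

/-- `W` is an Atkin–Lehner matrix for `d = (δ)` at level `n = (ν)`: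
`W = [[δa, b],[νc, δd]]` with determinant `ζδ`, `ζ ∈ F_q^×`. -/
def IsAL {Fq : Type} [Field Fq] (ν δ : Polynomial Fq)
    (W : Matrix (Fin 2) (Fin 2) (Polynomial Fq)) : Prop :=
  δ ∣ W 0 0 ∧ ν ∣ W 1 0 ∧ δ ∣ W 1 1 ∧ ∃ ζ : Fq, ζ ≠ 0 ∧ W.det = Polynomial.C ζ * δ

/-- (a) `Q ↦ Q'` with `deg Q' < deg P` and `Q ≡ βQ' (mod P)` is a
bijection on polynomials of degree `< deg P`; (b) the matrix identity
`[[1,Q],[0,P]] · [[βδ,−αP],[πP,δ]] = M · [[1,Q'],[0,P]]` where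
`M = [[δ(β+ρPQ), δe−πQQ'−α],[πP², δ(1−ρPQ')]]` (with `Q−βQ' = Pe`, `π = δρ`)
has entries in `A`, determinant `δ`, and is an Atkin–Lehner matrix `W_{(δ)}^{(π)}`. -/
theorem hecke_atkinLehner_matrix_identity {Fq : Type} [Field Fq] [Fintype Fq]
    (π P δ ρ α β : Polynomial Fq)
    (hP : P.Monic) (hPirr : Irreducible P) (hcop : IsCoprime π P)
    (hπ : π = δ * ρ) (hcopδ : IsCoprime δ ρ)
    (hαβ : α * ρ * P ^ 2 + β * δ = 1) :
    (∀ Q : Polynomial Fq, Q.degree < P.degree →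
      ∃! Q' : Polynomial Fq, Q'.degree < P.degree ∧ P ∣ (Q - β * Q')) ∧
    (∀ Q' : Polynomial Fq, Q'.degree < P.degree →
      ∃! Q : Polynomial Fq, Q.degree < P.degree ∧ P ∣ (Q - β * Q')) ∧
    (∀ Q Q' e : Polynomial Fq, Q.degree < P.degree → Q'.degree < P.degree →
      Q - β * Q' = P * e →
      (!![1, Q; 0, P] : Matrix (Fin 2) (Fin 2) (Polynomial Fq)) * !![β * δ, -α * P; π * P, δ] =
        !![δ * (β + ρ * P * Q), δ * e - π * Q * Q' - α;
           π * P ^ 2, δ * (1 - ρ * P * Q')] * !![1, Q'; 0, P] ∧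
      IsAL π δ (!![δ * (β + ρ * P * Q), δ * e - π * Q * Q' - α;
           π * P ^ 2, δ * (1 - ρ * P * Q')] : Matrix (Fin 2) (Fin 2) (Polynomial Fq)) ∧
      (!![δ * (β + ρ * P * Q), δ * e - π * Q * Q' - α;
           π * P ^ 2, δ * (1 - ρ * P * Q')] : Matrix (Fin 2) (Fin 2) (Polynomial Fq)).det = δ) := by
  have hPne : P ≠ 0 := hP.ne_zero
  have hcopβ : IsCoprime β P := ⟨δ, α * ρ * P, by linear_combination hαβ⟩
  have hPnotβ : ¬ P ∣ β := by
    intro h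
    obtain ⟨u, v, huv⟩ := hcopβ
    exact hPirr.not_isUnit (isUnit_of_dvd_one
      (huv ▸ dvd_add (h.mul_left u) (dvd_mul_left P v)))
  have key_uniq : ∀ a b : Polynomial Fq, a.degree < P.degree → b.degree < P.degree →
      P ∣ (a - b) → a = b := by
    intro a b ha hb h
    have h0 : a - b = 0 := Polynomial.eq_zero_of_dvd_of_degree_lt h
      (lt_of_le_of_lt (Polynomial.degree_sub_le _ _) (max_lt ha hb))
    exact sub_eq_zero.mp h0
  refine ⟨?_, ?_, ?_⟩
  · intro Q hQ
    have hmod := Polynomial.modByMonic_add_div (δ * Q) P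
    refine ⟨(δ * Q) %ₘ P, ⟨Polynomial.degree_modByMonic_lt _ hP,
      ⟨Q * α * ρ * P + β * ((δ * Q) /ₘ P), by linear_combination -Q * hαβ - β * hmod⟩⟩, ?_⟩
    rintro y ⟨hy, hdvd⟩
    have hdvd0 : P ∣ (Q - β * ((δ * Q) %ₘ P)) :=
      ⟨Q * α * ρ * P + β * ((δ * Q) /ₘ P), by linear_combination -Q * hαβ - β * hmod⟩
    have hmul : P ∣ β * (y - ((δ * Q) %ₘ P)) := by
      have := dvd_sub hdvd0 hdvd
      simpa [mul_sub] using this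
    have hdy : P ∣ (y - ((δ * Q) %ₘ P)) :=
      (hPirr.prime.2.2 _ _ hmul).resolve_left hPnotβ
    exact key_uniq y _ hy (Polynomial.degree_modByMonic_lt _ hP) hdy
  · intro Q' hQ'
    have hmod := Polynomial.modByMonic_add_div (β * Q') P
    refine ⟨(β * Q') %ₘ P, ⟨Polynomial.degree_modByMonic_lt _ hP,
      ⟨-((β * Q') /ₘ P), by linear_combination hmod⟩⟩, ?_⟩
    rintro y ⟨hy, hdvd⟩
    have hdvd0 : P ∣ ((β * Q') %ₘ P - β * Q') := ⟨-((β * Q') /ₘ P), by linear_combination hmod⟩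
    exact key_uniq y _ hy (Polynomial.degree_modByMonic_lt _ hP)
      (by simpa using dvd_sub hdvd hdvd0)
  · intro Q Q' e hQ hQ' he
    have hdet : (!![δ * (β + ρ * P * Q), δ * e - π * Q * Q' - α;
        π * P ^ 2, δ * (1 - ρ * P * Q')] : Matrix (Fin 2) (Fin 2) (Polynomial Fq)).det = δ := by
      simp only [Matrix.det_fin_two_of]
      linear_combination δ * hαβ + (δ * ρ * P * δ) * he +
        (α * P ^ 2 + Q * Q' * P ^ 2 * (π + δ * ρ) - δ * P ^ 2 * e) * hπ
    refine ⟨?_, ⟨⟨β + ρ * P * Q, by simp⟩, by simp, ⟨1 - ρ * P * Q', by simp⟩,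
      ⟨1, one_ne_zero, by rw [hdet, Polynomial.C_1, one_mul]⟩⟩, hdet⟩
    refine Matrix.ext fun i j => ?_
    fin_cases i <;> fin_cases j <;>
      simp only [Matrix.mul_apply, Fin.sum_univ_two, Fin.mk_zero, Fin.mk_one,
        Matrix.cons_val', Matrix.cons_val_zero, Matrix.cons_val_one, Matrix.head_cons,
        Matrix.empty_val', Matrix.cons_val_fin_one, Matrix.head_fin_const, Matrix.of_apply]
    · linear_combination P * Q * hπ
    · linear_combination δ * he + P * Q * Q' * hπ
    · ring
    · linear_combination (-(P ^ 2 * Q')) * hπ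
end
end

section
/- Let m = (π) and p = (P) be coprime ideals of A = F_q[t] with P monic irreducible of degree d. For f ∈ M_{k,m}(Γ0(m)) and an ideal d = (δ) with δ | π and gcd(δ, π/δ)=1, the Hecke operator T_p commutes with the Atkin–Lehner involution W_d^m: W_d^m(T_p(f)) = T_p(W_d^m(f)). -/
open Matrix Polynomial

noncomputable section

section Aux

variable {Fq Coo : Type} [Field Fq] [Field Coo] (ι : Polynomial Fq →+* Coo)
  (k m : ℤ) (π : Polynomial Fq) (f : Coo → Coo)

/-- helper : (x/c)/(y/c) = x/y for c ≠ 0 -/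
lemma div_div_same_aux {c : Coo} (hc : c ≠ 0) (x y : Coo) : (x / c) / (y / c) = x / y := by
  rcases eq_or_ne y 0 with rfl | hy
  · simp
  · field_simp

/-- Pointwise form of weak modularity for a determinant-one matrix. -/
lemma wm_apply (hf : IsWeakModular ι k m π f) (γ : Matrix (Fin 2) (Fin 2) (Polynomial Fq))
    (hdet : γ.det = 1) (hc : π ∣ γ 1 0) (x : Coo) :
    f ((ι (γ 0 0) * x + ι (γ 0 1)) / (ι (γ 1 0) * x + ι (γ 1 1))) *
      (ι (γ 1 0) * x + ι (γ 1 1)) ^ (-k) = f x := by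
  have h := congrFun (hf γ ⟨by rw [hdet]; exact isUnit_one, hc⟩) x
  simp only [slash, moeb, hdet, _root_.map_one, _root_.one_zpow, mul_one] at h
  exact h


/-- Core cocycle lemma: slash-invariance in homogeneous coordinates, valid for
all (possibly degenerate) pairs `(n, e)`. -/
lemma core_lemma (hf : IsWeakModular ι k m π f) (γ : Matrix (Fin 2) (Fin 2) (Polynomial Fq))
    (hdet : γ.det = 1) (hc : π ∣ γ 1 0) (n e : Coo) :
    f ((ι (γ 0 0) * n + ι (γ 0 1) * e) / (ι (γ 1 0) * n + ι (γ 1 1) * e)) *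
      (ι (γ 1 0) * n + ι (γ 1 1) * e) ^ (-k) = f (n / e) * e ^ (-k) := by
  rcases eq_or_ne e 0 with rfl | he
  · simp only [mul_zero, add_zero, div_zero]
    rcases eq_or_ne n 0 with rfl | hn
    · simp
    rcases eq_or_ne (ι (γ 1 0)) 0 with hg | hg
    · rw [hg, zero_mul, div_zero]
    -- nondegenerate pole case
    have hd2 : γ 0 0 * γ 1 1 - γ 0 1 * γ 1 0 = 1 := by
      rw [Matrix.det_fin_two] at hdet; linear_combination hdet
    set γ' : Matrix (Fin 2) (Fin 2) (Polynomial Fq) := !![-(γ 1 1), γ 0 1; γ 1 0, -(γ 0 0)] with hγ'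
    have hdet' : γ'.det = 1 := by
      rw [hγ', Matrix.det_fin_two_of]; linear_combination hd2
    have hc' : π ∣ γ' 1 0 := by
      simpa [hγ'] using hc
    have key := wm_apply ι k m π f hf γ' hdet' hc' (ι (γ 0 0) / ι (γ 1 0))
    have hden : ι (γ' 1 0) * (ι (γ 0 0) / ι (γ 1 0)) + ι (γ' 1 1) = 0 := by
      have e1 : γ' 1 0 = γ 1 0 := by simp [hγ']
      have e2 : γ' 1 1 = -(γ 0 0) := by simp [hγ']
      rw [e1, e2, map_neg, mul_comm, div_mul_cancel₀ _ hg, add_neg_cancel]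
    rw [hden, div_zero] at key
    have hx : (ι (γ 0 0) * n) / (ι (γ 1 0) * n) = ι (γ 0 0) / ι (γ 1 0) :=
      mul_div_mul_right _ _ hn
    rw [hx]
    rcases eq_or_ne k 0 with rfl | hk
    · simp only [neg_zero, zpow_zero, mul_one] at key ⊢
      exact key.symm
    · rw [_root_.zero_zpow _ (neg_ne_zero.mpr hk), mul_zero] at key ⊢
      rw [← key, zero_mul]
  · -- e ≠ 0 : honest modularity
    have key := wm_apply ι k m π f hf γ hdet hc (n / e)
    have hnum : ι (γ 0 0) * (n / e) + ι (γ 0 1) = (ι (γ 0 0) * n + ι (γ 0 1) * e) / e := by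
      field_simp
    have hden : ι (γ 1 0) * (n / e) + ι (γ 1 1) = (ι (γ 1 0) * n + ι (γ 1 1) * e) / e := by
      field_simp
    rw [hnum, hden, div_div_same_aux he] at key
    calc f ((ι (γ 0 0) * n + ι (γ 0 1) * e) / (ι (γ 1 0) * n + ι (γ 1 1) * e)) *
          (ι (γ 1 0) * n + ι (γ 1 1) * e) ^ (-k)
        = f ((ι (γ 0 0) * n + ι (γ 0 1) * e) / (ι (γ 1 0) * n + ι (γ 1 1) * e)) *
          ((ι (γ 1 0) * n + ι (γ 1 1) * e) / e) ^ (-k) * e ^ (-k) := by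
          rw [mul_assoc, ← mul_zpow, div_mul_cancel₀ _ he]
      _ = f (n / e) * e ^ (-k) := by rw [key]


/-- Pointwise modularity with explicit entries. -/
lemma wm_apply' (hf : IsWeakModular ι k m π f) (a b c d : Polynomial Fq)
    (hdet : a * d - b * c = 1) (hc : π ∣ c) (x : Coo) :
    f ((ι a * x + ι b) / (ι c * x + ι d)) * (ι c * x + ι d) ^ (-k) = f x := by
  have key := wm_apply ι k m π f hf !![a, b; c, d]
    (by rw [Matrix.det_fin_two_of]; linear_combination hdet) hc x
  exact key

variable {P : Polynomial Fq}

/-- If `ι P = 0` (so `P` generates the kernel) and `k ≠ 0`, then `f 0 = 0`. -/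
lemma f_zero_of_ker (hf : IsWeakModular ι k m π f) (hcop : IsCoprime π P)
    (hiP : ι P = 0) (hk : k ≠ 0) : f 0 = 0 := by
  obtain ⟨u, v, huv⟩ := hcop
  have key := wm_apply' ι k m π f hf v (-u) π P (by linear_combination huv) dvd_rfl 0
  simp only [hiP, mul_zero, zero_mul, add_zero, zero_add] at key
  rw [_root_.zero_zpow _ (neg_ne_zero.mpr hk), mul_zero] at key
  exact key.symm

/-- If `k = 0`, then `f (ι Q / ι P) = f 0`. -/
lemma cusp_value (hf : IsWeakModular ι k m π f) (hcop : IsCoprime π P)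
    (hPirr : Irreducible P) (hk : k = 0) (Q : Polynomial Fq) :
    f (ι Q / ι P) = f 0 := by
  subst hk
  rcases eq_or_ne (ι P) 0 with hiP | hiP
  · rw [hiP, div_zero]
  by_cases hdvd : P ∣ Q
  · obtain ⟨Q2, rfl⟩ := hdvd
    rw [_root_.map_mul, mul_div_cancel_left₀ _ hiP]
    have key := wm_apply' ι 0 m π f hf 1 (-Q2) 0 1 (by ring) (dvd_zero π) (ι Q2)
    rw [map_neg, _root_.map_one, map_zero, zero_mul, zero_add, one_mul, neg_zero, zpow_zero,
      mul_one, add_neg_cancel, zero_div] at key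
    exact key.symm
  · have hco : IsCoprime P (π * Q) :=
      (hcop.symm).mul_right ((hPirr.coprime_iff_not_dvd).mpr hdvd)
    obtain ⟨a, b, hab⟩ := hco
    have key := wm_apply' ι 0 m π f hf P (-Q) (π * b) a
      (by linear_combination hab) ⟨b, rfl⟩ (ι Q / ι P)
    rw [map_neg, neg_zero, zpow_zero, mul_one, mul_div_cancel₀ _ hiP, add_neg_cancel,
      zero_div] at key
    exact key.symm

/-- If `ι P = 0` and `k = 0` then `f (ι B / ι D) = f 0`. -/
lemma cusp_value_W (hf : IsWeakModular ι k m π f) (hcop : IsCoprime π P)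
    (hPirr : Irreducible P) (hiP : ι P = 0) (hk : k = 0)
    (B D : Polynomial Fq) : f (ι B / ι D) = f 0 := by
  subst hk
  rcases eq_or_ne (ι D) 0 with hD | hD
  · rw [hD, div_zero]
  have hnd : ¬ P ∣ D := by
    rintro ⟨X, rfl⟩
    exact hD (by rw [_root_.map_mul, hiP, zero_mul])
  obtain ⟨a, b, hab⟩ := (hPirr.coprime_iff_not_dvd).mpr hnd
  have hbD : ι b * ι D = 1 := by
    have h2 := congrArg ι hab
    rw [map_add, _root_.map_mul, _root_.map_mul, hiP, mul_zero, zero_add, _root_.map_one] at h2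
    exact h2
  have key := wm_apply' ι 0 m π f hf 1 (-(B * b)) 0 1 (by ring) (dvd_zero π) (ι B / ι D)
  rw [map_neg, _root_.map_one, map_zero, zero_mul, zero_add, one_mul, neg_zero, zpow_zero,
    mul_one, _root_.map_mul] at key
  have hBb : ι B / ι D + -(ι B * ι b) = 0 := by
    rw [div_eq_mul_inv, inv_eq_of_mul_eq_one_right (by rw [mul_comm] at hbD; exact hbD)]
    ring
  rw [hBb, zero_div] at key
  exact key.symm


section MatEntry
variable {R : Type*}
lemma m00 (a b c d : R) : !![a, b; c, d] 0 0 = a := rfl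
lemma m01 (a b c d : R) : !![a, b; c, d] 0 1 = b := rfl
lemma m10 (a b c d : R) : !![a, b; c, d] 1 0 = c := rfl
lemma m11 (a b c d : R) : !![a, b; c, d] 1 1 = d := rfl
end MatEntry

/-- The key termwise identity: if `R·W = γ·(W·R')` with `γ ∈ Γ₀(π)` of determinant one,
then the `R`-summand of `(T_P f)|W` equals the `R'`-summand of `T_P (f|W)`. -/
lemma term_lemma (hf : IsWeakModular ι k m π f)
    (W γ : Matrix (Fin 2) (Fin 2) (Polynomial Fq)) (hWdet : W.det ≠ 0)
    (r s u r' s' u' : Polynomial Fq)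
    (hRW : !![r, s; 0, u] * W = γ * (W * !![r', s'; 0, u']))
    (hγdet : γ.det = 1) (hγc : π ∣ γ 1 0)
    (h4 : k = 0 → f (ι s / ι u) = f 0)
    (h6 : ι u' = 0 → k ≠ 0 → ι u = 0 ∨ f (ι s / ι u) = 0)
    (h5a : ι u' = 0 → k = 0 → f (moeb ι W 0) = f 0)
    (z : Coo) :
    slash ι k m !![r, s; 0, u] f (moeb ι W z) * ι W.det ^ m *
      (ι (W 1 0) * z + ι (W 1 1)) ^ (-k)
    = slash ι k m !![r', s'; 0, u'] (slash ι k m W f) z := by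
  -- determinant bookkeeping
  have hrr : r * u = r' * u' := by
    have hd := congrArg Matrix.det hRW
    rw [Matrix.det_mul, Matrix.det_mul, Matrix.det_mul, hγdet, one_mul,
      Matrix.det_fin_two_of, Matrix.det_fin_two_of] at hd
    have hd2 : (r * u - s * 0) * W.det = (r' * u' - s' * 0) * W.det := by
      linear_combination hd
    have := mul_right_cancel₀ hWdet hd2
    linear_combination this
  -- the four entry identities of hRW, mapped into Coo
  have hent : ∀ i j, ι ((!![r, s; 0, u] * W) i j) = ι ((γ * (W * !![r', s'; 0, u'])) i j) :=
    fun i j => by rw [hRW]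
  have c00 := hent 0 0
  have c01 := hent 0 1
  have c10 := hent 1 0
  have c11 := hent 1 1
  simp only [Matrix.mul_apply, Fin.sum_univ_two, m00, m01, m10, m11, map_add, _root_.map_mul,
    map_zero, zero_mul, mul_zero, add_zero, zero_add] at c00 c01 c10 c11
  -- abbreviations
  set n : Coo := ι (W 0 0) * z + ι (W 0 1) with hn_def
  set a : Coo := ι (W 1 0) * z + ι (W 1 1) with ha_def
  set n1 : Coo := ι (W 0 0) * ι r' * z + (ι (W 0 0) * ι s' + ι (W 0 1) * ι u') with hn1_def
  set d1 : Coo := ι (W 1 0) * ι r' * z + (ι (W 1 0) * ι s' + ι (W 1 1) * ι u') with hd1_def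
  set n2 : Coo := ι r * n + ι s * a with hn2_def
  set d2 : Coo := ι u * a with hd2_def
  have hn2γ : n2 = ι (γ 0 0) * n1 + ι (γ 0 1) * d1 := by
    rw [hn2_def, hn1_def, hd1_def, hn_def, ha_def]
    linear_combination c00 * z + c01
  have hd2γ : d2 = ι (γ 1 0) * n1 + ι (γ 1 1) * d1 := by
    rw [hd2_def, hd1_def, hn1_def, ha_def]
    linear_combination c10 * z + c11
  have hcore := core_lemma ι k m π f hf γ hγdet hγc n1 d1
  rw [← hn2γ, ← hd2γ] at hcore
  -- unfold the slash operators
  simp only [slash, moeb, Matrix.det_fin_two_of, m00, m01, m10, m11,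
    map_zero, zero_mul, zero_add, mul_zero, sub_zero]
  rw [← hn_def, ← ha_def]
  -- left-hand side reduction
  have hL : f ((ι r * (n / a) + ι s) / ι u) * (ι u) ^ (-k) * a ^ (-k) =
      f (n2 / d2) * d2 ^ (-k) := by
    rcases eq_or_ne a 0 with ha0 | ha0
    · have hd20 : d2 = 0 := by rw [hd2_def, ha0, mul_zero]
      rcases eq_or_ne k 0 with rfl | hk
      · simp only [neg_zero, zpow_zero, mul_one]
        rw [ha0, div_zero, mul_zero, zero_add, h4 rfl, hd20, div_zero]
      · rw [ha0, hd20, _root_.zero_zpow _ (neg_ne_zero.mpr hk), mul_zero, mul_zero]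
    · have h1 : ι r * (n / a) + ι s = n2 / a := by
        rw [hn2_def]; field_simp
      rw [h1, div_div, mul_comm a (ι u), ← hd2_def, mul_assoc, ← mul_zpow, hd2_def]
  rcases eq_or_ne (ι u') 0 with hu' | hu'
  · -- degenerate branch : ι u' = 0
    have hru : ι r * ι u = 0 := by
      have h7 := congrArg ι hrr
      rw [_root_.map_mul, _root_.map_mul, hu', mul_zero] at h7
      exact h7
    rw [hu', div_zero, mul_zero, zero_add, mul_zero, zero_add]
    rcases eq_or_ne k 0 with rfl | hk
    · simp only [neg_zero, zpow_zero, mul_one]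
      have h5 := h5a hu' rfl
      simp only [moeb, mul_zero, zero_add] at h5
      rw [h5]
      have hgoal : f ((ι r * (n / a) + ι s) / ι u) = f 0 := by
        rcases eq_or_ne (ι u) 0 with hiu | hiu
        · rw [hiu, div_zero]
        · have hir : ι r = 0 := by
            rcases mul_eq_zero.mp hru with h | h
            · exact h
            · exact absurd h hiu
          rw [hir, zero_mul, zero_add]
          exact h4 rfl
      rw [hgoal, hrr]
      ring
    · rw [_root_.zero_zpow _ (neg_ne_zero.mpr hk), mul_zero]
      rcases eq_or_ne (ι u) 0 with hiu | hiu
      · rw [hiu, _root_.zero_zpow _ (neg_ne_zero.mpr hk)]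
        ring
      · have hir : ι r = 0 := by
          rcases mul_eq_zero.mp hru with h | h
          · exact h
          · exact absurd h hiu
        have hfs : f (ι s / ι u) = 0 := by
          rcases h6 hu' hk with h | h
          · exact absurd h hiu
          · exact h
        rw [hir, zero_mul, zero_add, hfs]
        ring
  · -- main branch
    have hw'n : ι (W 0 0) * ((ι r' * z + ι s') / ι u') + ι (W 0 1) = n1 / ι u' := by
      rw [hn1_def]; field_simp; ring
    have hw'd : ι (W 1 0) * ((ι r' * z + ι s') / ι u') + ι (W 1 1) = d1 / ι u' := by
      rw [hd1_def]; field_simp; ring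
    have hR : f ((ι (W 0 0) * ((ι r' * z + ι s') / ι u') + ι (W 0 1)) /
          (ι (W 1 0) * ((ι r' * z + ι s') / ι u') + ι (W 1 1))) *
          (ι (W 1 0) * ((ι r' * z + ι s') / ι u') + ι (W 1 1)) ^ (-k) * (ι u') ^ (-k) =
        f (n1 / d1) * d1 ^ (-k) := by
      rw [hw'n, hw'd, div_div_same_aux hu', mul_assoc, ← mul_zpow, div_mul_cancel₀ _ hu']
    rw [hrr]
    linear_combination (hL.trans hcore) * (ι (r' * u') ^ m * ι W.det ^ m) -
      hR * (ι (r' * u') ^ m * ι W.det ^ m)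

end Aux

set_option maxHeartbeats 1600000 in
/-- Theorem `ThmComm`: for `(π,P)=1`, `P` monic irreducible,
`δ ∣ π` with `gcd(δ,π/δ)=1`, and `f ∈ M_{k,m}(Γ₀(π))`, the Hecke operator `T_p`
commutes with the Atkin–Lehner involution `W_d^m`. -/
theorem heckeT_comm_atkinLehner {Fq Coo : Type} [Field Fq] [Fintype Fq] [Field Coo]
    (ι : Polynomial Fq →+* Coo) (k m : ℤ)
    (π P δ ε : Polynomial Fq)
    (hP : P.Monic) (hPirr : Irreducible P) (hcop : IsCoprime π P)
    (hπ : π = δ * ε) (hcopδ : IsCoprime δ ε)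
    (W : Matrix (Fin 2) (Fin 2) (Polynomial Fq)) (hW : IsAL π δ W)
    (f : Coo → Coo) (hf : IsWeakModular ι k m π f) :
    slash ι k m W (heckeT ι k m P f) = heckeT ι k m P (slash ι k m W f) := by
  classical
  obtain ⟨hA, hC, hDD, ζ, hζ0, hdetW⟩ := hW
  obtain ⟨A1, hA1⟩ := hA
  obtain ⟨C1, hC1⟩ := hC
  obtain ⟨D1, hD1⟩ := hDD
  have hπne : π ≠ 0 := by
    rintro rfl
    exact hPirr.not_isUnit (isCoprime_zero_left.mp hcop)
  have hδne : δ ≠ 0 := fun h => hπne (by rw [hπ, h, zero_mul])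
  have hζC : (Polynomial.C ζ : Polynomial Fq) ≠ 0 := fun h => hζ0 (by
    simpa using congrArg (fun p => Polynomial.coeff p 0) h)
  have hWdetne : W.det ≠ 0 := by rw [hdetW]; exact mul_ne_zero hζC hδne
  have hPpi : ¬ P ∣ π := fun h => hPirr.not_isUnit (hcop.isUnit_of_dvd' h dvd_rfl)
  have hδπ : δ ∣ π := ⟨ε, hπ⟩
  have hcopδP : IsCoprime δ P := hcop.of_isCoprime_of_dvd_left hδπ
  -- the basic determinant relation
  have relE : δ * A1 * D1 - ε * (W 0 1) * C1 = Polynomial.C ζ := by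
    have hdet2 : W 0 0 * W 1 1 - W 0 1 * W 1 0 = Polynomial.C ζ * δ := by
      rw [← Matrix.det_fin_two, hdetW]
    rw [hA1, hD1, hC1, hπ] at hdet2
    refine mul_left_cancel₀ hδne ?_
    linear_combination hdet2
  have hZE : Polynomial.C ζ⁻¹ * (δ * A1 * D1 - ε * (W 0 1) * C1) = 1 := by
    rw [relE, ← Polynomial.C_mul, inv_mul_cancel₀ hζ0, Polynomial.C_1]
  -- residue field
  haveI : Fact (Irreducible P) := ⟨hPirr⟩
  set T := (Fin P.natDegree → Fq) with hT
  set φ := AdjoinRoot.mk P with hφ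
  set Qt : T → Polynomial Fq :=
    fun t => ∑ i : Fin P.natDegree, Polynomial.C (t i) * Polynomial.X ^ (i : ℕ) with hQt
  obtain ⟨ρ, hρ⟩ : ∃ ρ : T ≃ AdjoinRoot P, ∀ t, φ (Qt t) = ρ t := by
    set pb := AdjoinRoot.powerBasis' hP with hpb
    refine ⟨(pb.basis.equivFun.symm : (Fin P.natDegree → Fq) ≃ₗ[Fq] AdjoinRoot P).toEquiv, ?_⟩
    intro t
    have h2 : ∀ i : Fin P.natDegree, pb.basis i = AdjoinRoot.root P ^ (i : ℕ) := by
      intro i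
      rw [PowerBasis.coe_basis]
      simp [hpb]
    show _ = pb.basis.equivFun.symm t
    erw [Module.Basis.equivFun_symm_apply, hQt, map_sum]
    congr 1
    funext i
    rw [h2 i, _root_.map_mul, map_pow, AdjoinRoot.mk_X, AdjoinRoot.mk_C, Algebra.smul_def]
    rfl
  set aa := φ (W 0 0) with haa
  set ba := φ (W 0 1) with hba
  set ca := φ (W 1 0) with hca
  set da := φ (W 1 1) with hda
  have hΔ : aa * da - ba * ca ≠ 0 := by
    have h1 : φ P = 0 := by
      rw [hφ, AdjoinRoot.mk_self]
    have hpd : ¬ P ∣ δ := fun h => hPpi (h.trans hδπ)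
    have h2 : φ δ ≠ 0 := fun h => hpd ((AdjoinRoot.mk_eq_zero).mp h)
    have h3 : φ (Polynomial.C ζ) ≠ 0 := fun h =>
      hPirr.not_isUnit (isUnit_of_dvd_unit ((AdjoinRoot.mk_eq_zero).mp h)
        (Polynomial.isUnit_C.mpr (isUnit_iff_ne_zero.mpr hζ0)))
    have h4 : φ W.det ≠ 0 := by
      rw [hdetW, _root_.map_mul]
      exact mul_ne_zero h3 h2
    have h5 : W.det = W 0 0 * W 1 1 - W 0 1 * W 1 0 := Matrix.det_fin_two W
    rw [h5, map_sub, _root_.map_mul, _root_.map_mul] at h4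
    exact h4
  -- the permutation of coset representatives
  set σ : Option T → Option T := fun i =>
    i.elim (if ca = 0 then none else some (ρ.symm (da * ca⁻¹)))
      (fun t => if aa + ρ t * ca = 0 then none
        else some (ρ.symm ((ba + ρ t * da) * (aa + ρ t * ca)⁻¹))) with hσdef
  have hσn : σ none = (if ca = 0 then none else some (ρ.symm (da * ca⁻¹))) := rfl
  have hσs : ∀ t, σ (some t) = (if aa + ρ t * ca = 0 then none
      else some (ρ.symm ((ba + ρ t * da) * (aa + ρ t * ca)⁻¹))) := fun t => rfl
  have hinj : Function.Injective σ := by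
    have hca0 : ∀ t : T, aa + ρ t * ca = 0 → ca = 0 → False := by
      intro t h1 h2
      rw [h2, mul_zero, add_zero] at h1
      exact hΔ (by rw [h1, h2]; ring)
    intro i j hij
    rcases i with _ | t <;> rcases j with _ | t2
    · rfl
    · rw [hσn, hσs] at hij
      by_cases hc : ca = 0 <;> by_cases h2 : aa + ρ t2 * ca = 0
      · exact (hca0 t2 h2 hc).elim
      · rw [if_pos hc, if_neg h2] at hij
        simp at hij
      · rw [if_neg hc, if_pos h2] at hij
        simp at hij
      · rw [if_neg hc, if_neg h2] at hij
        have h4 := ρ.symm.injective (Option.some.inj hij)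
        field_simp at h4
        rw [eq_div_iff (by rw [mul_comm]; exact h2)] at h4
        exact absurd (show aa * da - ba * ca = 0 by linear_combination h4) hΔ
    · rw [hσn, hσs] at hij
      by_cases hc : ca = 0 <;> by_cases h2 : aa + ρ t * ca = 0
      · exact (hca0 t h2 hc).elim
      · rw [if_pos hc, if_neg h2] at hij
        simp at hij
      · rw [if_neg hc, if_pos h2] at hij
        simp at hij
      · rw [if_neg hc, if_neg h2] at hij
        have h4 := ρ.symm.injective (Option.some.inj hij)
        field_simp at h4
        exact absurd (show aa * da - ba * ca = 0 by linear_combination -h4) hΔ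
    · rw [hσs, hσs] at hij
      by_cases h1 : aa + ρ t * ca = 0 <;> by_cases h2 : aa + ρ t2 * ca = 0
      · have hcane : ca ≠ 0 := fun h => hca0 t h1 h
        have h6 : (ρ t - ρ t2) * ca = 0 := by linear_combination h1 - h2
        rcases mul_eq_zero.mp h6 with h7 | h7
        · rw [ρ.injective (sub_eq_zero.mp h7)]
        · exact absurd h7 hcane
      · rw [if_pos h1, if_neg h2] at hij
        simp at hij
      · rw [if_neg h1, if_pos h2] at hij
        simp at hij
      · rw [if_neg h1, if_neg h2] at hij
        have h4 := ρ.symm.injective (Option.some.inj hij)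
        field_simp at h4
        rw [eq_div_iff (by rw [mul_comm]; exact h2)] at h4
        have h7 : (ρ t - ρ t2) * (aa * da - ba * ca) = 0 := by linear_combination h4
        rcases mul_eq_zero.mp h7 with h8 | h8
        · rw [ρ.injective (sub_eq_zero.mp h8)]
        · exact absurd h8 hΔ
  set Rm : Option T → Matrix (Fin 2) (Fin 2) (Polynomial Fq) := fun i =>
    i.elim !![P, 0; 0, 1] (fun t => !![1, Qt t; 0, P]) with hRm
  have hRmn : Rm none = !![P, 0; 0, 1] := rfl
  have hRms : ∀ t, Rm (some t) = !![1, Qt t; 0, P] := fun t => rfl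
  -- the matrix identities
  have key : ∀ i, ∃ γ : Matrix (Fin 2) (Fin 2) (Polynomial Fq),
      Rm i * W = γ * (W * Rm (σ i)) ∧ γ.det = 1 ∧ π ∣ γ 1 0 := by
    have hWeta : W = !![W 0 0, W 0 1; W 1 0, W 1 1] := Matrix.eta_fin_two W
    intro i
    rcases i with _ | t
    · by_cases hc : ca = 0
      · -- branch N0
        have hσi : σ none = none := by rw [hσn, if_pos hc]
        rw [hσi, hRmn]
        have hPC : P ∣ W 1 0 := (AdjoinRoot.mk_eq_zero).mp hc
        have hPC1 : P ∣ C1 := (hcop.symm).dvd_of_dvd_mul_left (by rw [hC1] at hPC; exact hPC)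
        obtain ⟨C2, hC2⟩ := hPC1
        rw [hC2] at hZE
        refine ⟨!![1 + Polynomial.C ζ⁻¹ * (ε * W 0 1 * (P * C2) * (1 - P)),
            Polynomial.C ζ⁻¹ * (A1 * W 0 1 * (P - 1));
            Polynomial.C ζ⁻¹ * ((δ * ε) * (C2 * D1 * (1 - P))),
            1 + Polynomial.C ζ⁻¹ * (ε * W 0 1 * C2 * (P - 1))], ?_, ?_, ?_⟩
        · rw [hWeta, hA1, hC1, hD1, hC2, hπ]
          ext i j : 1
          fin_cases i <;> fin_cases j <;>
            simp only [Matrix.mul_apply, Fin.sum_univ_two, Fin.isValue, Fin.mk_zero, Fin.mk_one,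
              Matrix.cons_val', Matrix.cons_val_zero, Matrix.cons_val_one, Matrix.head_cons,
              Matrix.head_fin_const, Matrix.empty_val', Matrix.cons_val_fin_one, Matrix.of_apply]
          · ring
          · linear_combination (W 0 1 - P * (W 0 1)) * hZE
          · linear_combination (-(P*C2*δ*ε) + P^2*C2*δ*ε) * hZE
          · ring
        · rw [Matrix.det_fin_two_of]
          linear_combination ((W 0 1)*C2*ε*(Polynomial.C ζ⁻¹) - 2*P*(W 0 1)*C2*ε*(Polynomial.C ζ⁻¹)
            + P^2*(W 0 1)*C2*ε*(Polynomial.C ζ⁻¹)) * hZE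
        · show π ∣ Polynomial.C ζ⁻¹ * ((δ * ε) * (C2 * D1 * (1 - P)))
          exact ⟨Polynomial.C ζ⁻¹ * (C2 * D1 * (1 - P)), by rw [hπ]; ring⟩
      · -- branch N1
        have hσi : σ none = some (ρ.symm (da * ca⁻¹)) := by rw [hσn, if_neg hc]
        rw [hσi, hRmn, hRms]
        set Qp := Qt (ρ.symm (da * ca⁻¹)) with hQp
        have hQpφ : φ Qp = da * ca⁻¹ := by rw [hQp, hρ]; exact ρ.apply_symm_apply _
        have hPdvd : P ∣ W 1 0 * Qp - W 1 1 := by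
          refine (AdjoinRoot.mk_eq_zero).mp ?_
          have : φ (W 1 0 * Qp - W 1 1) = ca * (da * ca⁻¹) - da := by
            rw [map_sub, _root_.map_mul, hQpφ]
          rw [this]
          field_simp
          ring
        obtain ⟨K, hK⟩ := hPdvd
        have hδK : δ ∣ K := hcopδP.dvd_of_dvd_mul_left
          ⟨ε * C1 * Qp - D1, by rw [← hK, hC1, hD1, hπ]; ring⟩
        obtain ⟨K1, hK1⟩ := hδK
        have hE2 : ε * C1 * Qp - D1 = P * K1 := by
          refine mul_left_cancel₀ hδne ?_
          rw [hC1, hD1, hπ, hK1] at hK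
          linear_combination hK
        refine ⟨!![1 + Polynomial.C ζ⁻¹ * (δ*A1*P*(D1+K1)),
            Polynomial.C ζ⁻¹ * (A1*(W 0 1*(1-P) - δ*A1*Qp));
            Polynomial.C ζ⁻¹ * ((δ * ε)*(C1*(D1+K1))),
            -(Polynomial.C ζ⁻¹ * (ε*(W 0 1)*C1 + δ*A1*K1))], ?_, ?_, ?_⟩
        · rw [hWeta, hA1, hC1, hD1, hπ]
          ext i j : 1
          fin_cases i <;> fin_cases j <;>
            simp only [Matrix.mul_apply, Fin.sum_univ_two, Fin.isValue, Fin.mk_zero, Fin.mk_one,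
              Matrix.cons_val', Matrix.cons_val_zero, Matrix.cons_val_one, Matrix.head_cons,
              Matrix.head_fin_const, Matrix.empty_val', Matrix.cons_val_fin_one, Matrix.of_apply]
          · linear_combination (A1^2*δ^2*(Polynomial.C ζ⁻¹)) * hE2 + (A1*δ - P*A1*δ) * hZE
          · linear_combination (Qp*A1^2*δ^2*(Polynomial.C ζ⁻¹)
              + P*(W 0 1)*A1*δ*(Polynomial.C ζ⁻¹)) * hE2 + (Qp*A1*δ) * hZE
          · linear_combination (-(C1*δ*ε)) * hZE
          · linear_combination (-δ) * hE2 + (-(Qp*C1*δ*ε) + P*K1*δ) * hZE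
        · rw [Matrix.det_fin_two_of]
          linear_combination (A1*δ*(Polynomial.C ζ⁻¹) + A1^2*K1*δ^2*(Polynomial.C ζ⁻¹)^2
              + (W 0 1)*A1*C1*δ*ε*(Polynomial.C ζ⁻¹)^2) * hE2
            + (1 + A1*K1*δ*(Polynomial.C ζ⁻¹) + Qp*A1*C1*δ*ε*(Polynomial.C ζ⁻¹)
              - P*A1*K1*δ*(Polynomial.C ζ⁻¹)) * hZE
        · show π ∣ Polynomial.C ζ⁻¹ * ((δ * ε)*(C1*(D1+K1)))
          exact ⟨Polynomial.C ζ⁻¹ * (C1*(D1+K1)), by rw [hπ]; ring⟩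
    · by_cases h0 : aa + ρ t * ca = 0
      · -- branch S∞
        have hσi : σ (some t) = none := by rw [hσs, if_pos h0]
        rw [hσi, hRms, hRmn]
        have hPdvd : P ∣ W 0 0 + Qt t * W 1 0 := by
          refine (AdjoinRoot.mk_eq_zero).mp ?_
          have : φ (W 0 0 + Qt t * W 1 0) = aa + ρ t * ca := by
            rw [map_add, _root_.map_mul, hρ t]
          rw [this, h0]
        obtain ⟨L, hL⟩ := hPdvd
        have hδL : δ ∣ L := hcopδP.dvd_of_dvd_mul_left
          ⟨A1 + Qt t * (ε * C1), by rw [← hL, hA1, hC1, hπ]; ring⟩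
        obtain ⟨L1, hL1⟩ := hδL
        have hE3 : A1 + Qt t * (ε * C1) = P * L1 := by
          refine mul_left_cancel₀ hδne ?_
          rw [hA1, hC1, hπ, hL1] at hL
          linear_combination hL
        refine ⟨!![Polynomial.C ζ⁻¹ * (δ*D1*L1 - ε*C1*(W 0 1 + Qt t*(δ*D1))),
            Polynomial.C ζ⁻¹ * (A1*(W 0 1 + Qt t*(δ*D1)) - (W 0 1)*L1);
            Polynomial.C ζ⁻¹ * ((δ * ε)*(C1*D1*(1-P))),
            1 + Polynomial.C ζ⁻¹ * (δ*A1*D1*(P-1))], ?_, ?_, ?_⟩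
        · rw [hWeta, hA1, hC1, hD1, hπ]
          ext i j : 1
          fin_cases i <;> fin_cases j <;>
            simp only [Matrix.mul_apply, Fin.sum_univ_two, Fin.isValue, Fin.mk_zero, Fin.mk_one,
              Matrix.cons_val', Matrix.cons_val_zero, Matrix.cons_val_one, Matrix.head_cons,
              Matrix.head_fin_const, Matrix.empty_val', Matrix.cons_val_fin_one, Matrix.of_apply]
          · linear_combination δ * hE3 + (-(P*L1*δ)) * hZE
          · linear_combination (-(W 0 1) - Qt t*D1*δ) * hZE
          · ring
          · linear_combination (D1*δ - P*D1*δ) * hZE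
        · rw [Matrix.det_fin_two_of]
          linear_combination (-(D1*δ*(Polynomial.C ζ⁻¹))) * hE3
            + (1 - D1*L1*δ*(Polynomial.C ζ⁻¹) + P*D1*L1*δ*(Polynomial.C ζ⁻¹)) * hZE
        · show π ∣ Polynomial.C ζ⁻¹ * ((δ * ε)*(C1*D1*(1-P)))
          exact ⟨Polynomial.C ζ⁻¹ * (C1*D1*(1-P)), by rw [hπ]; ring⟩
      · -- branch S1
        have hσi : σ (some t) = some (ρ.symm ((ba + ρ t * da) * (aa + ρ t * ca)⁻¹)) := by
          rw [hσs, if_neg h0]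
        rw [hσi, hRms, hRms]
        set Qp := Qt (ρ.symm ((ba + ρ t * da) * (aa + ρ t * ca)⁻¹)) with hQp
        have hQpφ : φ Qp = (ba + ρ t * da) * (aa + ρ t * ca)⁻¹ := by
          rw [hQp, hρ]; exact ρ.apply_symm_apply _
        have hPdvd : P ∣ Qp * (W 0 0 + Qt t * W 1 0) - (W 0 1 + Qt t * W 1 1) := by
          refine (AdjoinRoot.mk_eq_zero).mp ?_
          have h9 : φ (Qp * (W 0 0 + Qt t * W 1 0) - (W 0 1 + Qt t * W 1 1))
              = ((ba + ρ t * da) * (aa + ρ t * ca)⁻¹) * (aa + ρ t * ca) - (ba + ρ t * da) := by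
            rw [map_sub, _root_.map_mul, map_add, _root_.map_mul, map_add, _root_.map_mul,
              hQpφ, hρ t]
          rw [h9, inv_mul_cancel_right₀ h0, sub_self]
        obtain ⟨M, hM⟩ := hPdvd
        rw [hA1, hC1, hD1, hπ] at hM
        refine ⟨!![Polynomial.C ζ⁻¹ * (δ*D1*(A1 + Qt t*(ε*C1)) + ε*C1*M),
            -(Polynomial.C ζ⁻¹ * ((W 0 1)*(A1 + Qt t*(ε*C1)) + A1*M));
            Polynomial.C ζ⁻¹ * ((δ * ε)*(C1*(D1*(P-1) + ε*C1*Qp))),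
            1 + Polynomial.C ζ⁻¹ * (ε*C1*((W 0 1)*(1-P) - δ*A1*Qp))], ?_, ?_, ?_⟩
        · rw [hWeta, hA1, hC1, hD1, hπ]
          ext i j : 1
          fin_cases i <;> fin_cases j <;>
            simp only [Matrix.mul_apply, Fin.sum_univ_two, Fin.isValue, Fin.mk_zero, Fin.mk_one,
              Matrix.cons_val', Matrix.cons_val_zero, Matrix.cons_val_one, Matrix.head_cons,
              Matrix.head_fin_const, Matrix.empty_val', Matrix.cons_val_fin_one, Matrix.of_apply]
          · linear_combination (-(A1*δ) - Qt t*C1*δ*ε) * hZE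
          · linear_combination (-1 : Polynomial Fq) * hM
              + (-(Qp*A1*δ) - Qt t*Qp*C1*δ*ε + P*M) * hZE
          · linear_combination (C1*δ*ε - P*C1*δ*ε) * hZE
          · linear_combination (Qp*C1*δ*ε) * hZE
        · rw [Matrix.det_fin_two_of]
          linear_combination (-(C1*ε*(Polynomial.C ζ⁻¹))) * hM
            + (1 - C1*M*ε*(Polynomial.C ζ⁻¹) - Qp*A1*C1*δ*ε*(Polynomial.C ζ⁻¹)
              - Qt t*Qp*C1^2*δ*ε^2*(Polynomial.C ζ⁻¹) + P*C1*M*ε*(Polynomial.C ζ⁻¹)) * hZE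
        · show π ∣ Polynomial.C ζ⁻¹ * ((δ * ε)*(C1*(D1*(P-1) + ε*C1*Qp)))
          exact ⟨Polynomial.C ζ⁻¹ * (C1*(D1*(P-1) + ε*C1*Qp)), by rw [hπ]; ring⟩
  -- the sum decomposition of the Hecke operator
  have hsum : ∀ (g : Coo → Coo) (z : Coo), heckeT ι k m P g z
      = ι P ^ (k - m) * ∑ i : Option T, slash ι k m (Rm i) g z := by
    intro g z
    rw [Fintype.sum_option, mul_add]
    rfl
  -- assembly
  funext z
  have hterm : ∀ i, slash ι k m (Rm i) f (moeb ι W z) * ι W.det ^ m *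
      (ι (W 1 0) * z + ι (W 1 1)) ^ (-k) = slash ι k m (Rm (σ i)) (slash ι k m W f) z := by
    have hfP0 : k ≠ 0 → ι P = 0 → f 0 = 0 := fun hk hiP =>
      f_zero_of_ker ι k m π f hf hcop hiP hk
    have hmv : moeb ι W 0 = ι (W 0 1) / ι (W 1 1) := by
      rw [moeb, mul_zero, zero_add, mul_zero, zero_add]
    intro i
    rcases i with _ | t
    · obtain ⟨γ, hRWγ, hγd, hγc⟩ := key none
      rcases hσi : σ none with _ | t'
      · simp only [hσi, hRmn, hRms] at hRWγ ⊢
        refine term_lemma ι k m π f hf W γ hWdetne P 0 1 P 0 1 hRWγ hγd hγc ?_ ?_ ?_ z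
        · intro _; rw [map_zero, zero_div]
        · intro h1; exact absurd (by rw [_root_.map_one] at h1; exact h1) one_ne_zero
        · intro h1; exact absurd (by rw [_root_.map_one] at h1; exact h1) one_ne_zero
      · simp only [hσi, hRmn, hRms] at hRWγ ⊢
        refine term_lemma ι k m π f hf W γ hWdetne P 0 1 1 (Qt t') P hRWγ hγd hγc ?_ ?_ ?_ z
        · intro _; rw [map_zero, zero_div]
        · intro hiP hk
          right
          rw [map_zero, zero_div]
          exact hfP0 hk hiP
        · intro hiP hk
          rw [hmv]
          exact cusp_value_W ι k m π f hf hcop hPirr hiP hk _ _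
    · obtain ⟨γ, hRWγ, hγd, hγc⟩ := key (some t)
      rcases hσi : σ (some t) with _ | t'
      · simp only [hσi, hRmn, hRms] at hRWγ ⊢
        refine term_lemma ι k m π f hf W γ hWdetne 1 (Qt t) P P 0 1 hRWγ hγd hγc ?_ ?_ ?_ z
        · intro hk; exact cusp_value ι k m π f hf hcop hPirr hk _
        · intro h1; exact absurd (by rw [_root_.map_one] at h1; exact h1) one_ne_zero
        · intro h1; exact absurd (by rw [_root_.map_one] at h1; exact h1) one_ne_zero
      · simp only [hσi, hRmn, hRms] at hRWγ ⊢
        refine term_lemma ι k m π f hf W γ hWdetne 1 (Qt t) P 1 (Qt t') P hRWγ hγd hγc ?_ ?_ ?_ z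
        · intro hk; exact cusp_value ι k m π f hf hcop hPirr hk _
        · intro hiP _; left; exact hiP
        · intro hiP hk
          rw [hmv]
          exact cusp_value_W ι k m π f hf hcop hPirr hiP hk _ _
  show heckeT ι k m P f (moeb ι W z) * ι W.det ^ m * (ι (W 1 0) * z + ι (W 1 1)) ^ (-k)
      = heckeT ι k m P (slash ι k m W f) z
  rw [hsum f (moeb ι W z), hsum (slash ι k m W f) z]
  calc (ι P ^ (k - m) * ∑ i : Option T, slash ι k m (Rm i) f (moeb ι W z)) * ι W.det ^ m *
        (ι (W 1 0) * z + ι (W 1 1)) ^ (-k)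
      = ι P ^ (k - m) * ∑ i : Option T, (slash ι k m (Rm i) f (moeb ι W z) * ι W.det ^ m *
        (ι (W 1 0) * z + ι (W 1 1)) ^ (-k)) := by
        rw [Finset.mul_sum, Finset.sum_mul, Finset.sum_mul, Finset.mul_sum]
        exact Finset.sum_congr rfl fun i _ => by ring
    _ = ι P ^ (k - m) * ∑ i : Option T, slash ι k m (Rm (σ i)) (slash ι k m W f) z := by
        congr 1
        exact Finset.sum_congr rfl fun i _ => hterm i
    _ = ι P ^ (k - m) * ∑ i : Option T, slash ι k m (Rm i) (slash ι k m W f) z := by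
        congr 1
        exact Equiv.sum_comp (Equiv.ofBijective σ (Finite.injective_iff_bijective.mp hinj))
          (fun i => slash ι k m (Rm i) (slash ι k m W f) z)
end
end

section
/- Let m, p be coprime ideals of A = F_q[t], p = (P) prime. Define S^{p-new} = Ker(Tr) ∩ Ker(Tr^{(p)}) ⊂ S_{k,m}(Γ0(mp)), where Tr = Tr_m^{mp} and Tr^{(p)} = Tr ∘ W_p^{mp}. Then for every f ∈ S^{p-new}, one has U_p(f) |_{k,m} W_p^{mp} = −P^m f = U_p(f |_{k,m} W_p^{mp}); in particular W_p^{mp} and U_p commute on S^{p-new}. -/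
open Matrix

noncomputable section

/-- The trace map from level `mp` down to level `m`, defined via the formula
`Tr(f) = f + P^{-m} U_p(f |_{k,m} W_p^{mp})` (Lemma `LemTr` of the paper). -/
def trMap {Fq Coo : Type} [Field Fq] [Fintype Fq] [Field Coo] (ι : Polynomial Fq →+* Coo)
    (k m : ℤ) (P : Polynomial Fq) (Wp : Matrix (Fin 2) (Fin 2) (Polynomial Fq))
    (f : Coo → Coo) : Coo → Coo :=
  fun z => f z + ι P ^ (-m) * heckeU ι k m P (slash ι k m Wp f) z

/-- The `p`-twisted trace `Tr^{(p)}(f) = f |_{k,m} W_p^{mp} + P^{m-k} U_p(f)`. -/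
def trTwP {Fq Coo : Type} [Field Fq] [Fintype Fq] [Field Coo] (ι : Polynomial Fq →+* Coo)
    (k m : ℤ) (P : Polynomial Fq) (Wp : Matrix (Fin 2) (Fin 2) (Polynomial Fq))
    (f : Coo → Coo) : Coo → Coo :=
  fun z => slash ι k m Wp f z + ι P ^ (m - k) * heckeU ι k m P f z


/-! ### Auxiliary lemmas -/

namespace NewformAux

open Polynomial

variable {Fq Coo : Type} [Field Fq] [Fintype Fq] [Field Coo]

/-- The polynomial indexed by a coefficient tuple in `heckeU`. -/
def QQ (P : Polynomial Fq) (c : Fin P.natDegree → Fq) : Polynomial Fq :=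
  ∑ i : Fin P.natDegree, Polynomial.C (c i) * Polynomial.X ^ (i : ℕ)

lemma QQ_zero (P : Polynomial Fq) : QQ P 0 = 0 := by
  simp [QQ]

lemma QQ_deg_lt (P : Polynomial Fq) (hP : P.Monic) (hPirr : Irreducible P)
    (c : Fin P.natDegree → Fq) : (QQ P c).degree < P.degree := by
  have hne : P ≠ 0 := hP.ne_zero
  have hd0 : 0 < P.natDegree := by
    rcases Nat.eq_zero_or_pos P.natDegree with h | h
    · exact absurd (by simpa [hP.natDegree_eq_zero.mp h] using isUnit_one)
        hPirr.not_isUnit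
    · exact h
  rw [degree_eq_natDegree hne]
  apply lt_of_le_of_lt (degree_sum_le _ _)
  rw [Finset.sup_lt_iff (by exact_mod_cast WithBot.bot_lt_coe _)]
  intro i _
  exact lt_of_le_of_lt (degree_C_mul_X_pow_le _ _) (by exact_mod_cast i.is_lt)

lemma QQ_coeff (P : Polynomial Fq) (c : Fin P.natDegree → Fq) (i : Fin P.natDegree) :
    (QQ P c).coeff (i : ℕ) = c i := by
  rw [QQ, finset_sum_coeff, Finset.sum_eq_single i]
  · simp
  · intro j _ hji
    rw [coeff_C_mul, coeff_X_pow, if_neg (by simpa [Fin.val_eq_val] using (Ne.symm hji)),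
      mul_zero]
  · simp

lemma QQ_ne_zero (P : Polynomial Fq) (c : Fin P.natDegree → Fq) (hc : c ≠ 0) : QQ P c ≠ 0 := by
  intro h
  apply hc
  funext i
  have := QQ_coeff P c i
  rw [h] at this
  simpa using this.symm

lemma QQ_not_dvd (P : Polynomial Fq) (hP : P.Monic) (hPirr : Irreducible P)
    (c : Fin P.natDegree → Fq) (hc : c ≠ 0) : ¬ P ∣ QQ P c := by
  intro h
  exact absurd (Polynomial.degree_le_of_dvd h (QQ_ne_zero P c hc))
    (not_le.mpr (QQ_deg_lt P hP hPirr c))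

variable (ι : Polynomial Fq →+* Coo) (k m : ℤ) (P : Polynomial Fq)

/-- `heckeU` fully unfolded. -/
lemma heckeU_unfold (g : Coo → Coo) (z : Coo) :
    heckeU ι k m P g z =
      ι P ^ (k - m) * ∑ c : Fin P.natDegree → Fq,
        (g ((z + ι (QQ P c)) / ι P) * ι P ^ m * (ι P) ^ (-k)) := by
  unfold heckeU slash moeb QQ
  congr 1
  apply Finset.sum_congr rfl
  intro c _
  have hdet : (!![1, ∑ i : Fin P.natDegree, Polynomial.C (c i) * Polynomial.X ^ (i : ℕ); 0, P] :
      Matrix (Fin 2) (Fin 2) (Polynomial Fq)).det = P := by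
    rw [Matrix.det_fin_two_of]; ring
  simp only [hdet, Fin.isValue, Matrix.of_apply, Matrix.cons_val', Matrix.cons_val_zero,
    Matrix.empty_val', Matrix.cons_val_fin_one, Matrix.cons_val_one, Matrix.head_fin_const,
    Matrix.head_cons, _root_.map_one, _root_.map_zero, one_mul, zero_mul, zero_add]

/-- `heckeU` in the non-degenerate case. -/
lemma heckeU_eq (hu : ι P ≠ 0) (g : Coo → Coo) (z : Coo) :
    heckeU ι k m P g z =
      ∑ c : Fin P.natDegree → Fq, g ((z + ι (QQ P c)) / ι P) := by
  rw [heckeU_unfold, Finset.mul_sum]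
  apply Finset.sum_congr rfl
  intro c _
  have hpow : ι P ^ (k - m) * ι P ^ m * ι P ^ (-k) = 1 := by
    rw [← zpow_add₀ hu, ← zpow_add₀ hu]; norm_num
  calc ι P ^ (k - m) * (g ((z + ι (QQ P c)) / ι P) * ι P ^ m * ι P ^ (-k))
      = g ((z + ι (QQ P c)) / ι P) * (ι P ^ (k - m) * ι P ^ m * ι P ^ (-k)) := by ring
    _ = _ := by rw [hpow, mul_one]

/-- `slash` of an explicit 2×2 matrix. -/
lemma slash_lit (A B C D : Polynomial Fq) (g : Coo → Coo) (z : Coo) :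
    slash ι k m !![A, B; C, D] g z =
      g ((ι A * z + ι B) / (ι C * z + ι D)) * ι (A * D - B * C) ^ m *
        (ι C * z + ι D) ^ (-k) := by
  unfold slash moeb
  rw [Matrix.det_fin_two_of]
  simp only [Fin.isValue, Matrix.of_apply, Matrix.cons_val', Matrix.cons_val_zero,
    Matrix.empty_val', Matrix.cons_val_fin_one, Matrix.cons_val_one, Matrix.head_fin_const,
    Matrix.head_cons]

end NewformAux

open NewformAux

/-- Proposition `ThmCommNew`: if `f` is a `p`-newform, i.e.
`Tr(f) = 0` and `Tr^{(p)}(f) = 0`, then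
`U_p(f)|W_p = −P^m f = U_p(f|W_p)`; in particular `W_p^{mp}` and `U_p` commute
on the space of `p`-newforms. -/
theorem newform_Up_Wp_comm {Fq Coo : Type} [Field Fq] [Fintype Fq] [Field Coo]
    (ι : Polynomial Fq →+* Coo) (k m : ℤ)
    (π P : Polynomial Fq)
    (hP : P.Monic) (hPirr : Irreducible P) (hcop : IsCoprime π P)
    (Wp : Matrix (Fin 2) (Fin 2) (Polynomial Fq))
    (hWp : IsAL (π * P) P Wp) (hWpdet : Wp.det = P)
    (f : Coo → Coo) (hf : IsWeakModular ι k m (π * P) f)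
    (hTr : trMap ι k m P Wp f = 0) (hTrp : trTwP ι k m P Wp f = 0) :
    slash ι k m Wp (heckeU ι k m P f) = (fun z => -(ι P ^ m) * f z) ∧
    heckeU ι k m P (slash ι k m Wp f) = (fun z => -(ι P ^ m) * f z) ∧
    slash ι k m Wp (heckeU ι k m P f) = heckeU ι k m P (slash ι k m Wp f) := by
  classical
  -- pointwise versions of the trace conditions
  have hTr' : ∀ z, f z + ι P ^ (-m) * heckeU ι k m P (slash ι k m Wp f) z = 0 := by
    intro z; simpa [trMap] using congrFun hTr z
  have hTrp' : ∀ z, slash ι k m Wp f z + ι P ^ (m - k) * heckeU ι k m P f z = 0 := by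
    intro z; simpa [trTwP] using congrFun hTrp z
  have hU0 : ∀ (g : Coo → Coo), (∀ y, g y = 0) → ∀ z, heckeU ι k m P g z = 0 := by
    intro g hg z
    rw [heckeU_unfold]
    simp [hg]
  by_cases hu0 : ι P = 0
  · -- degenerate case: `ι P = 0`
    by_cases hm : m = 0
    · subst hm
      by_cases hk : k = 0
      · -- `k = m = 0`, `ι P = 0`
        subst hk
        have hUc : ∀ (g : Coo → Coo) (z : Coo),
            heckeU ι 0 0 P g z = (Fintype.card (Fin P.natDegree → Fq)) • g 0 := by
          intro g z
          rw [heckeU_unfold, hu0]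
          simp only [sub_self, zpow_zero, div_zero, neg_zero, mul_one, one_mul,
            Finset.sum_const, Finset.card_univ]
        have hWent : ι (Wp 0 0) = 0 ∧ ι (Wp 1 0) = 0 ∧ ι (Wp 1 1) = 0 := by
          obtain ⟨⟨a₁, ha⟩, ⟨c₁, hc⟩, ⟨d₁, hd⟩, -⟩ := hWp
          refine ⟨?_, ?_, ?_⟩ <;> simp [ha, hc, hd, _root_.map_mul, hu0]
        have hslW : ∀ (g : Coo → Coo) (z : Coo), slash ι 0 0 Wp g z = g 0 := by
          intro g z
          unfold slash moeb
          rw [hWpdet, hu0, hWent.1, hWent.2.1, hWent.2.2]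
          simp only [zero_mul, zero_add, add_zero, div_zero, zpow_zero, neg_zero, mul_one]
        have hcard : ∀ z, f z + (Fintype.card (Fin P.natDegree → Fq)) • f 0 = 0 := by
          intro z
          have h := hTr' z
          rw [hUc, hslW, neg_zero, zpow_zero, one_mul] at h
          exact h
        have G1 : slash ι 0 0 Wp (heckeU ι 0 0 P f) = (fun z => -(ι P ^ (0:ℤ)) * f z) := by
          funext z
          rw [hslW, hUc, zpow_zero, neg_one_mul]
          exact eq_neg_of_add_eq_zero_right (hcard z)
        have G2 : heckeU ι 0 0 P (slash ι 0 0 Wp f) = (fun z => -(ι P ^ (0:ℤ)) * f z) := by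
          funext z
          rw [hUc, hslW, zpow_zero, neg_one_mul]
          exact eq_neg_of_add_eq_zero_right (hcard z)
        exact ⟨G1, G2, G1.trans G2.symm⟩
      · -- `m = 0`, `k ≠ 0`, `ι P = 0`: everything vanishes
        have hsl : ∀ z, slash ι k 0 Wp f z = 0 := by
          intro z
          have h := hTrp' z
          rw [hu0, _root_.zero_zpow _ (by omega : (0:ℤ) - k ≠ 0), zero_mul, add_zero] at h
          exact h
        have hf0 : ∀ z, f z = 0 := by
          intro z
          have h := hTr' z
          rw [hU0 _ hsl, mul_zero, add_zero] at h
          exact h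
        have hUf : ∀ z, heckeU ι k 0 P f z = 0 := hU0 _ hf0
        have G1 : slash ι k 0 Wp (heckeU ι k 0 P f) = (fun z => -(ι P ^ (0:ℤ)) * f z) := by
          funext z
          unfold slash
          rw [hUf, zero_mul, zero_mul, hf0, mul_zero]
        have G2 : heckeU ι k 0 P (slash ι k 0 Wp f) = (fun z => -(ι P ^ (0:ℤ)) * f z) := by
          funext z
          rw [hU0 _ hsl, hf0, mul_zero]
        exact ⟨G1, G2, G1.trans G2.symm⟩
    · -- `m ≠ 0`, `ι P = 0`: everything vanishes
      have hf0 : ∀ z, f z = 0 := by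
        intro z
        have h := hTr' z
        rw [hu0, _root_.zero_zpow _ (neg_ne_zero.mpr hm), zero_mul, add_zero] at h
        exact h
      have hsl : ∀ z, slash ι k m Wp f z = 0 := by
        intro z; unfold slash; rw [hf0, zero_mul, zero_mul]
      have G1 : slash ι k m Wp (heckeU ι k m P f) = (fun z => -(ι P ^ m) * f z) := by
        funext z
        unfold slash
        rw [hU0 _ hf0, zero_mul, zero_mul, hf0, mul_zero]
      have G2 : heckeU ι k m P (slash ι k m Wp f) = (fun z => -(ι P ^ m) * f z) := by
        funext z
        rw [hU0 _ hsl, hf0, mul_zero]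
      exact ⟨G1, G2, G1.trans G2.symm⟩
  · -- main case: `ι P ≠ 0`
    obtain ⟨⟨a₁, ha⟩, ⟨c₁, hc⟩, ⟨d₁, hd⟩, -⟩ := hWp
    have hPne : P ≠ 0 := hP.ne_zero
    have hE : P * a₁ * d₁ - π * Wp 0 1 * c₁ = 1 := by
      apply mul_left_cancel₀ hPne
      have hdet2 := hWpdet
      rw [Matrix.det_fin_two, ha, hc, hd] at hdet2
      linear_combination hdet2
    have hPrime : Prime P := hPirr.prime
    have hP1 : ¬ P ∣ (1 : Polynomial Fq) := fun h => hPirr.not_isUnit (isUnit_of_dvd_one h)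
    have hdvd_imp : ¬ P ∣ π * Wp 0 1 * c₁ := by
      intro h
      exact hP1 (by
        have h2 : P ∣ P * a₁ * d₁ := ⟨a₁ * d₁, by ring⟩
        calc P ∣ P * a₁ * d₁ - π * Wp 0 1 * c₁ := dvd_sub h2 h
          _ = 1 := hE)
    have hndvd_pi : ¬ P ∣ π := fun h => hdvd_imp (h.mul_right _ |>.mul_right _)
    have hndvd_b : ¬ P ∣ Wp 0 1 := fun h => hdvd_imp ((h.mul_left _).mul_right _)
    have hndvd_c₁ : ¬ P ∣ c₁ := fun h => hdvd_imp (h.mul_left _)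
    have copP : ∀ x : Polynomial Fq, ¬ P ∣ x → IsCoprime P x :=
      fun x hx => (hPrime.coprime_iff_not_dvd).mpr hx
    have hA : ι (Wp 0 0) = ι P * ι a₁ := by rw [ha, _root_.map_mul]
    have hC : ι (Wp 1 0) = ι π * ι P * ι c₁ := by
      rw [hc, _root_.map_mul, _root_.map_mul]
    have hD : ι (Wp 1 1) = ι P * ι d₁ := by rw [hd, _root_.map_mul]
    have hslW : ∀ (g : Coo → Coo) (z : Coo), slash ι k m Wp g z =
        g ((ι (Wp 0 0) * z + ι (Wp 0 1)) / (ι (Wp 1 0) * z + ι (Wp 1 1))) * ι P ^ m *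
          (ι (Wp 1 0) * z + ι (Wp 1 1)) ^ (-k) := by
      intro g z; unfold slash moeb; rw [hWpdet]
    -- Goal 2 : `U_p(f|W) = -P^m f`
    have G2 : heckeU ι k m P (slash ι k m Wp f) = (fun z => -(ι P ^ m) * f z) := by
      funext z
      have h2 : ι P ^ (-m) * heckeU ι k m P (slash ι k m Wp f) z = - f z :=
        eq_neg_of_add_eq_zero_right (hTr' z)
      have hmm : m + -m = 0 := by omega
      calc heckeU ι k m P (slash ι k m Wp f) z
          = ι P ^ m * (ι P ^ (-m) * heckeU ι k m P (slash ι k m Wp f) z) := by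
            rw [← mul_assoc, ← zpow_add₀ hu0, hmm, zpow_zero, one_mul]
        _ = ι P ^ m * (- f z) := by rw [h2]
        _ = -(ι P ^ m) * f z := by ring
    -- pole vanishing (k ≠ 0)
    have PVk : k ≠ 0 → ∀ (x : Coo) (Ap Bp Cp Dp : Polynomial Fq), (π*P) ∣ Cp →
        Ap * Dp - Bp * Cp = 1 → ι Cp * x + ι Dp = 0 → f x = 0 := by
      intro hk x Ap Bp Cp Dp hdvd hdet hcond
      have hmem : (!![Ap, Bp; Cp, Dp] : Matrix (Fin 2) (Fin 2) (Polynomial Fq)) ∈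
          Gamma0 (π*P) := by
        constructor
        · rw [Matrix.det_fin_two_of, hdet]; exact isUnit_one
        · show (π*P) ∣ (!![Ap,Bp;Cp,Dp] : Matrix (Fin 2) (Fin 2) (Polynomial Fq)) 1 0
          simpa using hdvd
      have h := congrFun (hf _ hmem) x
      rw [slash_lit, hcond, _root_.zero_zpow _ (neg_ne_zero.mpr hk), mul_zero] at h
      exact h.symm
    -- pole value (k = 0)
    have PV0 : k = 0 → ∀ (x : Coo) (Ap Bp Cp Dp : Polynomial Fq), (π*P) ∣ Cp →
        Ap * Dp - Bp * Cp = 1 → ι Cp * x + ι Dp = 0 → f x = f 0 := by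
      intro hk x Ap Bp Cp Dp hdvd hdet hcond
      have hmem : (!![Ap, Bp; Cp, Dp] : Matrix (Fin 2) (Fin 2) (Polynomial Fq)) ∈
          Gamma0 (π*P) := by
        constructor
        · rw [Matrix.det_fin_two_of, hdet]; exact isUnit_one
        · show (π*P) ∣ (!![Ap,Bp;Cp,Dp] : Matrix (Fin 2) (Fin 2) (Polynomial Fq)) 1 0
          simpa using hdvd
      have h := congrFun (hf _ hmem) x
      rw [slash_lit, hk, neg_zero, zpow_zero, mul_one, hcond, div_zero, hdet,
        _root_.map_one, _root_.one_zpow, mul_one] at h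
      exact h.symm
    -- value at a cusp equivalent to 0 (k = 0)
    have C0 : k = 0 → ∀ (G D' Ap Cp : Polynomial Fq), (π*P) ∣ Cp → Ap * D' - G * Cp = 1 →
        f (ι G / ι D') = f 0 := by
      intro hk G D' Ap Cp hdvd hdet
      have hmem : (!![Ap, G; Cp, D'] : Matrix (Fin 2) (Fin 2) (Polynomial Fq)) ∈
          Gamma0 (π*P) := by
        constructor
        · rw [Matrix.det_fin_two_of, hdet]; exact isUnit_one
        · show (π*P) ∣ (!![Ap,G;Cp,D'] : Matrix (Fin 2) (Fin 2) (Polynomial Fq)) 1 0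
          simpa using hdvd
      have h := congrFun (hf _ hmem) 0
      rw [slash_lit, hk, neg_zero, zpow_zero, mul_one, hdet, _root_.map_one, _root_.one_zpow,
        mul_one, mul_zero, zero_add, mul_zero, zero_add] at h
      exact h
    -- mapped Bezout identity
    have hE' : ι P * ι a₁ * ι d₁ - ι π * ι (Wp 0 1) * ι c₁ = 1 := by
      have := congrArg ι hE
      simpa only [map_sub, _root_.map_mul, _root_.map_one] using this
    -- coprimality pile
    have cop_c₁_P : IsCoprime c₁ P := ⟨-(π * Wp 0 1), a₁ * d₁, by linear_combination hE⟩
    have cop_π_Pd₁ : IsCoprime π (P * d₁) := ⟨-(Wp 0 1 * c₁), a₁, by linear_combination hE⟩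
    have cop_c₁_Pd₁ : IsCoprime c₁ (P * d₁) := ⟨-(π * Wp 0 1), a₁, by linear_combination hE⟩
    have copN : IsCoprime (π * P * (c₁ * (d₁ * (1 - P))))
        (π * Wp 0 1 * c₁ - P ^ 2 * (a₁ * d₁)) := by
      set N := π * Wp 0 1 * c₁ - P ^ 2 * (a₁ * d₁) with hN
      have cop_π_N : IsCoprime π N := by
        have h1 := (hcop.neg_right).add_mul_left_right (Wp 0 1 * c₁ * (1 - P))
        have h2 : -P + π * (Wp 0 1 * c₁ * (1 - P)) = N := by
          rw [hN]; linear_combination P * hE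
        rwa [h2] at h1
      have cop_P_N : IsCoprime P N := by
        have h0 : IsCoprime P (-1 : Polynomial Fq) := ⟨0, -1, by ring⟩
        have h1 := h0.add_mul_left_right (a₁ * d₁ * (1 - P))
        have h2 : -1 + P * (a₁ * d₁ * (1 - P)) = N := by
          rw [hN]; linear_combination hE
        rwa [h2] at h1
      have cop_c₁_N : IsCoprime c₁ N := by
        have h1 := (cop_c₁_P.neg_right).add_mul_left_right (π * Wp 0 1 * (1 - P))
        have h2 : -P + c₁ * (π * Wp 0 1 * (1 - P)) = N := by
          rw [hN]; linear_combination P * hE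
        rwa [h2] at h1
      have cop_d₁_N : IsCoprime d₁ N := by
        have h0 : IsCoprime d₁ (-1 : Polynomial Fq) := ⟨0, -1, by ring⟩
        have h1 := h0.add_mul_left_right (P * a₁ * (1 - P))
        have h2 : -1 + d₁ * (P * a₁ * (1 - P)) = N := by
          rw [hN]; linear_combination hE
        rwa [h2] at h1
      have cop_1P_N : IsCoprime (1 - P) N := by
        have h0 : IsCoprime (1 - P) P := ⟨1, 1, by ring⟩
        have h1 := (h0.neg_right).add_mul_left_right (π * Wp 0 1 * c₁)
        have h2 : -P + (1 - P) * (π * Wp 0 1 * c₁) = N := by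
          rw [hN]; linear_combination P * hE
        rwa [h2] at h1
      exact (cop_π_N.mul_left cop_P_N).mul_left
        (cop_c₁_N.mul_left (cop_d₁_N.mul_left cop_1P_N))
    have copA : ∀ c : Fin P.natDegree → Fq, c ≠ 0 →
        IsCoprime (π * P * c₁) (P * d₁ - QQ P c * (π * c₁)) := by
      intro c hcne
      have cop_π : IsCoprime π (P * d₁ - QQ P c * (π * c₁)) := by
        have h1 := cop_π_Pd₁.add_mul_left_right (-(QQ P c * c₁))
        have h2 : P * d₁ + π * -(QQ P c * c₁) = P * d₁ - QQ P c * (π * c₁) := by ring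
        rwa [h2] at h1
      have cop_P : IsCoprime P (P * d₁ - QQ P c * (π * c₁)) := by
        have hnd : ¬ P ∣ QQ P c * (π * c₁) := by
          intro h
          rcases hPrime.dvd_mul.mp h with h | h
          · exact QQ_not_dvd P hP hPirr c hcne h
          · rcases hPrime.dvd_mul.mp h with h | h
            · exact hndvd_pi h
            · exact hndvd_c₁ h
        have h1 := ((copP _ hnd).neg_right).add_mul_left_right d₁
        have h2 : -(QQ P c * (π * c₁)) + P * d₁ = P * d₁ - QQ P c * (π * c₁) := by ring
        rwa [h2] at h1
      have cop_c₁ : IsCoprime c₁ (P * d₁ - QQ P c * (π * c₁)) := by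
        have h1 := cop_c₁_Pd₁.add_mul_left_right (-(QQ P c * π))
        have h2 : P * d₁ + c₁ * -(QQ P c * π) = P * d₁ - QQ P c * (π * c₁) := by ring
        rwa [h2] at h1
      exact (cop_π.mul_left cop_P).mul_left cop_c₁
    -- key vanishing at the bad point, k ≠ 0
    have hCne : ∀ z : Coo, ι (Wp 1 0) * z + ι (Wp 1 1) = 0 → ι (Wp 1 0) ≠ 0 := by
      intro z hj h0
      rw [h0, zero_mul, zero_add] at hj
      apply hu0
      rw [← hWpdet, Matrix.det_fin_two, map_sub, _root_.map_mul, _root_.map_mul, hj, h0,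
        mul_zero, mul_zero, sub_zero]
    -- Step A: `U_p f (P z) = f z` at a bad point `z`
    have stepA : ∀ z : Coo, ι (Wp 1 0) * z + ι (Wp 1 1) = 0 → (k ≠ 0 → heckeU ι k m P f (ι P * z) = f z) ∧
        (k = 0 → heckeU ι k m P f (ι P * z) = f z + ((Fintype.card (Fin P.natDegree → Fq) : Coo) - 1) * f 0) := by
      intro z hj
      have hjj : ι π * ι P * ι c₁ * z + ι P * ι d₁ = 0 := by rw [← hC, ← hD]; exact hj
      have hcond : ∀ c : Fin P.natDegree → Fq,
          ι (π * P * c₁) * ((ι P * z + ι (QQ P c)) / ι P) +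
            ι (P * d₁ - QQ P c * (π * c₁)) = 0 := by
        intro c
        have hexp : ι (π * P * c₁) * ((ι P * z + ι (QQ P c)) / ι P) +
            ι (P * d₁ - QQ P c * (π * c₁)) = ι π * ι P * ι c₁ * z + ι P * ι d₁ := by
          simp only [map_sub, _root_.map_mul]
          field_simp
          ring
        rw [hexp, hjj]
      have hterm : ∀ c : Fin P.natDegree → Fq, c ≠ 0 → ∀ hk : k ≠ 0,
          f ((ι P * z + ι (QQ P c)) / ι P) = 0 := by
        intro c hcne hk
        obtain ⟨x, y, hxy⟩ := copA c hcne
        exact PVk hk _ y (-x) (π * P * c₁) (P * d₁ - QQ P c * (π * c₁)) ⟨c₁, by ring⟩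
          (by linear_combination hxy) (hcond c)
      have hterm0 : ∀ c : Fin P.natDegree → Fq, c ≠ 0 → ∀ hk : k = 0,
          f ((ι P * z + ι (QQ P c)) / ι P) = f 0 := by
        intro c hcne hk
        obtain ⟨x, y, hxy⟩ := copA c hcne
        exact PV0 hk _ y (-x) (π * P * c₁) (P * d₁ - QQ P c * (π * c₁)) ⟨c₁, by ring⟩
          (by linear_combination hxy) (hcond c)
      have hc0 : (ι P * z + ι (QQ P 0)) / ι P = z := by
        rw [QQ_zero, map_zero, add_zero, mul_div_cancel_left₀ _ hu0]
      constructor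
      · intro hk
        rw [heckeU_eq ι k m P hu0, Finset.sum_eq_single (0 : Fin P.natDegree → Fq)]
        · rw [hc0]
        · intro c _ hcne
          exact hterm c hcne hk
        · intro h; exact absurd (Finset.mem_univ _) h
      · intro hk
        rw [heckeU_eq ι k m P hu0]
        have hsum : ∀ c : Fin P.natDegree → Fq,
            f ((ι P * z + ι (QQ P c)) / ι P) =
              (if c = 0 then f z - f 0 else 0) + f 0 := by
          intro c
          by_cases hcz : c = 0
          · subst hcz; rw [if_pos rfl, hc0]; ring
          · rw [if_neg hcz, hterm0 c hcz hk, zero_add]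
        rw [Finset.sum_congr rfl (fun c _ => hsum c), Finset.sum_add_distrib,
          Finset.sum_ite_eq' Finset.univ (0 : Fin P.natDegree → Fq)
            (fun _ => f z - f 0), if_pos (Finset.mem_univ _), Finset.sum_const,
          Finset.card_univ, nsmul_eq_mul]
        ring
    -- Step B: value of `f|W` at `P z` for a bad point `z`
    have stepB : ∀ z : Coo, ι (Wp 1 0) * z + ι (Wp 1 1) = 0 →
        (k ≠ 0 → slash ι k m Wp f (ι P * z) = 0) ∧
        (k = 0 → slash ι k m Wp f (ι P * z) = f 0 * ι P ^ m) := by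
      intro z hj
      have hCz : ι (Wp 1 0) ≠ 0 := hCne z hj
      have hJeq : ι (Wp 1 0) * (ι P * z) + ι (Wp 1 1) = ι (Wp 1 1) * (1 - ι P) := by
        have hjz : ι (Wp 1 0) * z = - ι (Wp 1 1) := by linear_combination hj
        calc ι (Wp 1 0) * (ι P * z) + ι (Wp 1 1)
            = ι P * (ι (Wp 1 0) * z) + ι (Wp 1 1) := by ring
          _ = ι P * (- ι (Wp 1 1)) + ι (Wp 1 1) := by rw [hjz]
          _ = ι (Wp 1 1) * (1 - ι P) := by ring
      by_cases hJ : ι (Wp 1 0) * (ι P * z) + ι (Wp 1 1) = 0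
      · constructor
        · intro hk
          rw [hslW, hJ, _root_.zero_zpow _ (neg_ne_zero.mpr hk), mul_zero]
        · intro hk
          rw [hslW, hJ, hk, neg_zero, zpow_zero, mul_one, div_zero]
      · have hW11ne : ι (Wp 1 1) ≠ 0 := fun h => hJ (by rw [hJeq, h, zero_mul])
        have h1P : (1 : Coo) - ι P ≠ 0 := fun h => hJ (by rw [hJeq, h, mul_zero])
        have hπc : ι π * ι P * ι c₁ ≠ 0 := by rw [← hC]; exact hCz
        have hπne : ι π ≠ 0 := fun h => hπc (by rw [h, zero_mul, zero_mul])
        have hc₁ne : ι c₁ ≠ 0 := fun h => hπc (by rw [h, mul_zero])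
        have hd₁ne : ι d₁ ≠ 0 := by
          intro h; apply hW11ne; rw [hD, h, mul_zero]
        have hD₀ne : ι (π * P * (c₁ * (d₁ * (1 - P)))) ≠ 0 := by
          simp only [_root_.map_mul, map_sub, _root_.map_one]
          exact mul_ne_zero (mul_ne_zero hπne hu0)
            (mul_ne_zero hc₁ne (mul_ne_zero hd₁ne h1P))
        have hjj : ι π * ι P * ι c₁ * z + ι P * ι d₁ = 0 := by rw [← hC, ← hD]; exact hj
        have hmoeb : (ι (Wp 0 0) * (ι P * z) + ι (Wp 0 1)) /
              (ι (Wp 1 0) * (ι P * z) + ι (Wp 1 1))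
            = ι (π * Wp 0 1 * c₁ - P ^ 2 * (a₁ * d₁)) / ι (π * P * (c₁ * (d₁ * (1 - P)))) := by
          rw [div_eq_div_iff hJ hD₀ne]
          simp only [map_sub, _root_.map_mul, map_pow, _root_.map_one, hA, hC, hD]
          linear_combination (ι P * (ι P * ι a₁ * ι d₁ - ι π * ι (Wp 0 1) * ι c₁)) * hjj
        have hpole : ι (π * P * (c₁ * (d₁ * (1 - P)))) *
            (ι (π * Wp 0 1 * c₁ - P ^ 2 * (a₁ * d₁)) / ι (π * P * (c₁ * (d₁ * (1 - P))))) +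
            ι (-(π * Wp 0 1 * c₁ - P ^ 2 * (a₁ * d₁))) = 0 := by
          rw [mul_div_cancel₀ _ hD₀ne, map_neg, add_neg_cancel]
        obtain ⟨x, y, hxy⟩ := copN
        constructor
        · intro hk
          rw [hslW, hmoeb,
            PVk hk _ (-y) (-x) _ _ ⟨c₁ * (d₁ * (1 - P)), by ring⟩
              (by linear_combination hxy) hpole,
            zero_mul, zero_mul]
        · intro hk
          rw [hslW, hmoeb, hk, neg_zero, zpow_zero, mul_one,
            PV0 hk _ (-y) (-x) _ _ ⟨c₁ * (d₁ * (1 - P)), by ring⟩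
              (by linear_combination hxy) hpole]
    -- vanishing at bad points for k ≠ 0
    have FZ : k ≠ 0 → ∀ z : Coo, ι (Wp 1 0) * z + ι (Wp 1 1) = 0 → f z = 0 := by
      intro hk z hj
      have h := hTrp' (ι P * z)
      rw [(stepB z hj).1 hk, (stepA z hj).1 hk, zero_add] at h
      rcases mul_eq_zero.mp h with h | h
      · exact absurd h (zpow_ne_zero _ hu0)
      · exact h
    -- value at bad points for k = 0
    have K0a : k = 0 → ∀ z : Coo, ι (Wp 1 0) * z + ι (Wp 1 1) = 0 →
        f z = -((Fintype.card (Fin P.natDegree → Fq) : Coo)) * f 0 := by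
      intro hk z hj
      have h := hTrp' (ι P * z)
      rw [(stepB z hj).2 hk, (stepA z hj).2 hk, hk, sub_zero] at h
      have h2 : ι P ^ m * (f z + (Fintype.card (Fin P.natDegree → Fq) : Coo) * f 0) = 0 := by
        linear_combination h
      rcases mul_eq_zero.mp h2 with h3 | h3
      · exact absurd h3 (zpow_ne_zero _ hu0)
      · linear_combination h3
    -- coprimality for the cusp matrices (k = 0 case)
    have copC : ∀ c : Fin P.natDegree → Fq, c ≠ 0 →
        IsCoprime (π * c₁ * QQ P c + P * d₁) (π * (P * (a₁ * QQ P c + Wp 0 1))) := by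
      intro c hcne
      have cop1 : IsCoprime (π * c₁ * QQ P c + P * d₁) (a₁ * QQ P c + Wp 0 1) :=
        ⟨a₁, -(π * c₁), by linear_combination hE⟩
      have cop2 : IsCoprime (π * c₁ * QQ P c + P * d₁) π := by
        apply isCoprime_comm.mp
        have h1 := cop_π_Pd₁.add_mul_left_right (c₁ * QQ P c)
        have h2 : P * d₁ + π * (c₁ * QQ P c) = π * c₁ * QQ P c + P * d₁ := by ring
        rwa [h2] at h1
      have cop3 : IsCoprime (π * c₁ * QQ P c + P * d₁) P := by
        apply isCoprime_comm.mp
        have hnd : ¬ P ∣ π * c₁ * QQ P c := by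
          intro h
          rcases hPrime.dvd_mul.mp h with h | h
          · rcases hPrime.dvd_mul.mp h with h | h
            · exact hndvd_pi h
            · exact hndvd_c₁ h
          · exact QQ_not_dvd P hP hPirr c hcne h
        exact (copP _ hnd).add_mul_left_right d₁
      exact cop2.mul_right (cop3.mul_right cop1)
    -- value at the W-image of 0 when k = 0
    have K0b : k = 0 → ι (Wp 1 1) ≠ 0 →
        f (ι (Wp 0 1) / ι (Wp 1 1)) =
          -((Fintype.card (Fin P.natDegree → Fq) : Coo)) * f 0 := by
      intro hk hW11
      have h := hTr' 0
      rw [heckeU_eq ι k m P hu0] at h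
      have hterm : ∀ c : Fin P.natDegree → Fq,
          slash ι k m Wp f ((0 + ι (QQ P c)) / ι P) =
            f (ι (a₁ * QQ P c + Wp 0 1) / ι (π * c₁ * QQ P c + P * d₁)) * ι P ^ m := by
        intro c
        rw [hslW, hk, neg_zero, zpow_zero, mul_one, zero_add]
        have hnum : ι (Wp 0 0) * (ι (QQ P c) / ι P) + ι (Wp 0 1) =
            ι (a₁ * QQ P c + Wp 0 1) := by
          rw [hA, map_add, _root_.map_mul]
          field_simp
        have hden : ι (Wp 1 0) * (ι (QQ P c) / ι P) + ι (Wp 1 1) =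
            ι (π * c₁ * QQ P c + P * d₁) := by
          rw [hC, hD, map_add, _root_.map_mul, _root_.map_mul]
          field_simp
          simp only [_root_.map_mul]
        rw [hnum, hden]
      have hvals : ∀ c : Fin P.natDegree → Fq,
          slash ι k m Wp f ((0 + ι (QQ P c)) / ι P) =
            ((if c = 0 then f (ι (Wp 0 1) / ι (Wp 1 1)) - f 0 else 0) + f 0) * ι P ^ m := by
        intro c
        rw [hterm c]
        by_cases hcz : c = 0
        · subst hcz
          rw [if_pos rfl]
          have e1 : a₁ * QQ P 0 + Wp 0 1 = Wp 0 1 := by rw [QQ_zero]; ring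
          have e2 : π * c₁ * QQ P 0 + P * d₁ = P * d₁ := by rw [QQ_zero]; ring
          rw [e1, e2, ← hd]
          ring
        · rw [if_neg hcz]
          obtain ⟨x, y, hxy⟩ := copC c hcz
          rw [C0 hk (a₁ * QQ P c + Wp 0 1) (π * c₁ * QQ P c + P * d₁) x (-(π * P * y))
            ⟨-y, by ring⟩ (by linear_combination hxy)]
          ring
      rw [Finset.sum_congr rfl (fun c _ => hvals c), ← Finset.sum_mul,
        Finset.sum_add_distrib,
        Finset.sum_ite_eq' Finset.univ (0 : Fin P.natDegree → Fq)
          (fun _ => f (ι (Wp 0 1) / ι (Wp 1 1)) - f 0), if_pos (Finset.mem_univ _),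
        Finset.sum_const, Finset.card_univ, nsmul_eq_mul] at h
      -- h : f 0 + ι P ^ (-m) * ((f x₀ - f 0 + card * f 0) * ι P ^ m) = 0
      have hmne : ι P ^ m ≠ 0 := zpow_ne_zero _ hu0
      have hmm : ι P ^ (-m) * ι P ^ m = 1 := by
        rw [← zpow_add₀ hu0]; norm_num
      have h2 : f 0 + (f (ι (Wp 0 1) / ι (Wp 1 1)) - f 0 +
          (Fintype.card (Fin P.natDegree → Fq) : Coo) * f 0) = 0 := by
        calc f 0 + (f (ι (Wp 0 1) / ι (Wp 1 1)) - f 0 +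
              (Fintype.card (Fin P.natDegree → Fq) : Coo) * f 0)
            = f 0 + ι P ^ (-m) * ((f (ι (Wp 0 1) / ι (Wp 1 1)) - f 0 +
              (Fintype.card (Fin P.natDegree → Fq) : Coo) * f 0) * ι P ^ m) := by
              rw [show ∀ X : Coo, ι P ^ (-m) * (X * ι P ^ m) = (ι P ^ (-m) * ι P ^ m) * X
                from fun X => by ring, hmm, one_mul]
          _ = 0 := h
      linear_combination h2
    -- Goal 1 : `(U_p f)|W = -P^m f`
    have G1 : slash ι k m Wp (heckeU ι k m P f) = (fun z => -(ι P ^ m) * f z) := by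
      funext z
      by_cases hj : ι (Wp 1 0) * z + ι (Wp 1 1) = 0
      · -- bad point
        by_cases hk : k = 0
        · -- k = 0
          subst hk
          rw [hslW, hj, div_zero, neg_zero, zpow_zero, mul_one]
          -- goal : heckeU ι 0 m P f 0 * ι P ^ m = -(ι P ^ m) * f z
          have h := hTrp' 0
          rw [hslW, mul_zero, zero_add, mul_zero, zero_add, neg_zero, zpow_zero, mul_one,
            sub_zero] at h
          -- h : f (ι (Wp 0 1) / ι (Wp 1 1)) * ι P ^ m + ι P ^ m * heckeU ι 0 m P f 0 = 0
          by_cases hW11 : ι (Wp 1 1) = 0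
          · have hCz := hCne z hj
            have hz0 : z = 0 := by
              rw [hW11, add_zero] at hj
              rcases mul_eq_zero.mp hj with h' | h'
              · exact absurd h' hCz
              · exact h'
            rw [hW11, div_zero] at h
            subst hz0
            have h2 : ι P ^ m * (heckeU ι 0 m P f 0 + f 0) = 0 := by linear_combination h
            rcases mul_eq_zero.mp h2 with h3 | h3
            · exact absurd h3 (zpow_ne_zero _ hu0)
            · linear_combination (ι P ^ m) * h3
          · have hx := K0b rfl hW11
            have hz := K0a rfl z hj
            have h2 : ι P ^ m * (f (ι (Wp 0 1) / ι (Wp 1 1)) + heckeU ι 0 m P f 0) = 0 := by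
              linear_combination h
            rcases mul_eq_zero.mp h2 with h3 | h3
            · exact absurd h3 (zpow_ne_zero _ hu0)
            · rw [hx] at h3
              rw [hz]
              linear_combination (ι P ^ m) * h3
        · -- k ≠ 0
          rw [hslW, hj, _root_.zero_zpow _ (neg_ne_zero.mpr hk), mul_zero,
            FZ hk z hj, mul_zero]
      · -- good point : composition through `W² = P·M`
        rw [hslW]
        have hden : ι (Wp 1 0) * z + ι (Wp 1 1) ≠ 0 := hj
        -- notation
        set den := ι (Wp 1 0) * z + ι (Wp 1 1) with hdendef
        set num := ι (Wp 0 0) * z + ι (Wp 0 1) with hnumdef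
        set w := num / den with hwdef
        set tM := ι (P * a₁ ^ 2 + π * (Wp 0 1 * c₁)) * z + ι (Wp 0 1 * (a₁ + d₁)) with htMdef
        set jM := ι (π * P * (c₁ * (a₁ + d₁))) * z + ι (π * (Wp 0 1 * c₁) + P * d₁ ^ 2)
          with hjMdef
        have hS : ι (Wp 1 0) * w + ι (Wp 1 1) = (ι P * jM) / den := by
          rw [eq_div_iff hden, add_mul, hwdef, mul_assoc, div_mul_cancel₀ _ hden, hnumdef,
            hdendef, hjMdef]
          simp only [map_add, _root_.map_mul, map_pow, hA, hC, hD]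
          ring
        have hT : ι (Wp 0 0) * w + ι (Wp 0 1) = (ι P * tM) / den := by
          rw [eq_div_iff hden, add_mul, hwdef, mul_assoc, div_mul_cancel₀ _ hden, hnumdef,
            hdendef, htMdef]
          simp only [map_add, _root_.map_mul, map_pow, hA, hC, hD]
          ring
        have hdivdiv : ∀ (x y : Coo), (x / den) / (y / den) = x / y := by
          intro x y
          rcases eq_or_ne y 0 with hy | hy
          · rw [hy, zero_div, div_zero, div_zero]
          · field_simp
        have hmoebw : (ι (Wp 0 0) * w + ι (Wp 0 1)) / (ι (Wp 1 0) * w + ι (Wp 1 1)) =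
            tM / jM := by
          rw [hT, hS, hdivdiv, mul_div_mul_left _ _ hu0]
        -- modularity under M (with W² = P·M)
        have hdetM : (P * a₁ ^ 2 + π * (Wp 0 1 * c₁)) * (π * (Wp 0 1 * c₁) + P * d₁ ^ 2) -
            Wp 0 1 * (a₁ + d₁) * (π * P * (c₁ * (a₁ + d₁))) = 1 := by
          have hsq : (P * a₁ ^ 2 + π * (Wp 0 1 * c₁)) * (π * (Wp 0 1 * c₁) + P * d₁ ^ 2) -
              Wp 0 1 * (a₁ + d₁) * (π * P * (c₁ * (a₁ + d₁))) =
              (P * a₁ * d₁ - π * Wp 0 1 * c₁) ^ 2 := by ring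
          rw [hsq, hE, one_pow]
        have hmemM : (!![P * a₁ ^ 2 + π * (Wp 0 1 * c₁), Wp 0 1 * (a₁ + d₁);
            π * P * (c₁ * (a₁ + d₁)), π * (Wp 0 1 * c₁) + P * d₁ ^ 2] :
            Matrix (Fin 2) (Fin 2) (Polynomial Fq)) ∈ Gamma0 (π * P) := by
          constructor
          · rw [Matrix.det_fin_two_of, hdetM]; exact isUnit_one
          · show (π*P) ∣ (!![P * a₁ ^ 2 + π * (Wp 0 1 * c₁), Wp 0 1 * (a₁ + d₁);
              π * P * (c₁ * (a₁ + d₁)), π * (Wp 0 1 * c₁) + P * d₁ ^ 2] :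
              Matrix (Fin 2) (Fin 2) (Polynomial Fq)) 1 0
            simp only [Fin.isValue, Matrix.of_apply, Matrix.cons_val', Matrix.cons_val_zero,
              Matrix.empty_val', Matrix.cons_val_fin_one, Matrix.cons_val_one,
              Matrix.head_fin_const, Matrix.head_cons]
            exact ⟨c₁ * (a₁ + d₁), rfl⟩
        have hmodM := congrFun (hf _ hmemM) z
        rw [slash_lit, hdetM, _root_.map_one, _root_.one_zpow, mul_one] at hmodM
        -- hmodM : f (tM / jM) * jM ^ (-k) = f z
        -- use `hTrp'` at `w`
        have hUw : heckeU ι k m P f w = -(ι P ^ (k - m)) * slash ι k m Wp f w := by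
          have h2 : ι P ^ (m - k) * heckeU ι k m P f w = - slash ι k m Wp f w :=
            eq_neg_of_add_eq_zero_right (hTrp' w)
          have hkm : (k - m) + (m - k) = 0 := by omega
          calc heckeU ι k m P f w
              = ι P ^ (k - m) * (ι P ^ (m - k) * heckeU ι k m P f w) := by
                rw [← mul_assoc, ← zpow_add₀ hu0, hkm, zpow_zero, one_mul]
            _ = ι P ^ (k - m) * (- slash ι k m Wp f w) := by rw [h2]
            _ = -(ι P ^ (k - m)) * slash ι k m Wp f w := by ring
        rw [hUw, hslW f w, hmoebw, hS]
        have hzp : ((ι P * jM) / den) ^ (-k) * den ^ (-k) = ι P ^ (-k) * jM ^ (-k) := by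
          rw [← mul_zpow, div_mul_cancel₀ _ hden, mul_zpow]
        have hpows : ι P ^ (k - m) * ι P ^ m * ι P ^ m * ι P ^ (-k) = ι P ^ m := by
          rw [← zpow_add₀ hu0, ← zpow_add₀ hu0, ← zpow_add₀ hu0]
          congr 1
          omega
        calc -(ι P ^ (k - m)) * (f (tM / jM) * ι P ^ m * ((ι P * jM) / den) ^ (-k)) *
              ι P ^ m * den ^ (-k)
            = -(f (tM / jM) * ((((ι P * jM) / den) ^ (-k)) * den ^ (-k)) *
                (ι P ^ (k - m) * ι P ^ m * ι P ^ m)) := by ring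
          _ = -(f (tM / jM) * (ι P ^ (-k) * jM ^ (-k)) *
                (ι P ^ (k - m) * ι P ^ m * ι P ^ m)) := by rw [hzp]
          _ = -((f (tM / jM) * jM ^ (-k)) *
                (ι P ^ (k - m) * ι P ^ m * ι P ^ m * ι P ^ (-k))) := by ring
          _ = -(f z * ι P ^ m) := by rw [hmodM, hpows]
          _ = -(ι P ^ m) * f z := by ring
    exact ⟨G1, G2, G1.trans G2.symm⟩
end
end

section
/- Let f ∈ S^{p-new} := Ker(Tr) ∩ Ker(Tr^{(p)}) ⊂ S_{k,m}(Γ0(mp)), f ≠ 0. Then f is an eigenvector for U_p if and only if f is an eigenvector for W_p^{mp}. Moreover, if U_p f = λ f then f|W_p^{mp} = −P^{m−k}λ·f, so the W_p-eigenvalue equals −P^{m−k} times the U_p-eigenvalue; and since (W_p^{mp})² = ζ P^{2m−k} (ζ ∈ F_q^×), the U_p-eigenvalue λ satisfies λ² = ζ^{-1} P^{k} up to the unit, i.e. the W_p-eigenvalue has p-adic valuation m − k/2. -/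
open Matrix

noncomputable section

lemma slash_smul' {Fq Coo : Type} [Field Fq] [Field Coo] (ι : Polynomial Fq →+* Coo)
    (k m : ℤ) (M : Matrix (Fin 2) (Fin 2) (Polynomial Fq)) (c : Coo) (f : Coo → Coo) :
    slash ι k m M (c • f) = c • slash ι k m M f := by
  funext z
  simp only [slash, Pi.smul_apply, smul_eq_mul]
  ring

lemma heckeU_smul' {Fq Coo : Type} [Field Fq] [Fintype Fq] [Field Coo]
    (ι : Polynomial Fq →+* Coo) (k m : ℤ) (P : Polynomial Fq) (c : Coo) (f : Coo → Coo) :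
    heckeU ι k m P (c • f) = c • heckeU ι k m P f := by
  funext z
  simp only [heckeU, slash_smul', Pi.smul_apply, smul_eq_mul]
  rw [← Finset.mul_sum]
  ring

lemma heckeU_zero' {Fq Coo : Type} [Field Fq] [Fintype Fq] [Field Coo]
    (ι : Polynomial Fq →+* Coo) (k m : ℤ) (P : Polynomial Fq) :
    heckeU ι k m P (0 : Coo → Coo) = 0 := by
  funext z
  simp [heckeU, slash]

/-- for a nonzero `p`-newform `f` (i.e. `Tr(f) = Tr^{(p)}(f) = 0`),
`f` is a `U_p`-eigenvector iff it is a `W_p^{mp}`-eigenvector; if `U_p f = l·f`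
then `f|W_p = −P^{m−k} l · f`, and `l² = P^k` (with `W_p` normalized so that
`det W_p = P`, i.e. `(W_p)² = P^{2m−k}`, so the `W_p`-eigenvalue has
`p`-adic valuation `m − k/2`). -/
theorem newform_eigenvector_Up_iff_Wp {Fq Coo : Type} [Field Fq] [Fintype Fq] [Field Coo]
    (ι : Polynomial Fq →+* Coo) (k m : ℤ)
    (π P : Polynomial Fq)
    (hP : P.Monic) (hPirr : Irreducible P) (hcop : IsCoprime π P)
    (Wp : Matrix (Fin 2) (Fin 2) (Polynomial Fq))
    (hWp : IsAL (π * P) P Wp) (hWpdet : Wp.det = P)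
    (f : Coo → Coo) (hf : IsWeakModular ι k m (π * P) f) (hf0 : f ≠ 0)
    (hTr : trMap ι k m P Wp f = 0) (hTrp : trTwP ι k m P Wp f = 0) :
    ((∃ l : Coo, heckeU ι k m P f = l • f) ↔ (∃ μ : Coo, slash ι k m Wp f = μ • f)) ∧
    (∀ l : Coo, heckeU ι k m P f = l • f →
      slash ι k m Wp f = (-(ι P ^ (m - k) * l)) • f) ∧
    (∀ l : Coo, heckeU ι k m P f = l • f → l ^ 2 = ι P ^ k) := by
  obtain ⟨z0, hz0⟩ := Function.ne_iff.mp hf0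
  have hTrp' : ∀ z, slash ι k m Wp f z = -(ι P ^ (m - k) * heckeU ι k m P f z) := by
    intro z
    have h := congrFun hTrp z
    simp only [trTwP, Pi.zero_apply] at h
    linear_combination h
  have hTr' : ∀ z, f z = -(ι P ^ (-m) * heckeU ι k m P (slash ι k m Wp f) z) := by
    intro z
    have h := congrFun hTr z
    simp only [trMap, Pi.zero_apply] at h
    linear_combination h
  have part2 : ∀ l : Coo, heckeU ι k m P f = l • f →
      slash ι k m Wp f = (-(ι P ^ (m - k) * l)) • f := by
    intro l hU
    funext z
    rw [hTrp' z, congrFun hU z]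
    simp only [Pi.smul_apply, smul_eq_mul]
    ring
  have part3 : ∀ l : Coo, heckeU ι k m P f = l • f → l ^ 2 = ι P ^ k := by
    intro l hU
    have hs := part2 l hU
    have hz := hTr' z0
    rw [hs, heckeU_smul'] at hz
    simp only [Pi.smul_apply, smul_eq_mul] at hz
    rw [congrFun hU z0] at hz
    simp only [Pi.smul_apply, smul_eq_mul] at hz
    have key : (ι P ^ (-m) * (ι P ^ (m - k) * l ^ 2) - 1) * f z0 = 0 := by
      linear_combination -hz
    have h1 : ι P ^ (-m) * (ι P ^ (m - k) * l ^ 2) = 1 := by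
      rcases mul_eq_zero.mp key with h | h
      · exact sub_eq_zero.mp h
      · exact absurd h hz0
    by_cases hx : ι P = 0
    · rw [hx] at h1 ⊢
      by_cases hm : m = 0
      · subst hm
        by_cases hk0 : k = 0
        · subst hk0; simpa using h1
        · rw [_root_.zero_zpow (0 - k) (by omega)] at h1
          simp at h1
      · rw [_root_.zero_zpow (-m) (by omega)] at h1
        simp at h1
    · have h2 : ι P ^ (-m) * ι P ^ (m - k) = ι P ^ (-k) := by
        rw [← zpow_add₀ hx]
        congr 1
        ring
      have h3 : ι P ^ (-k) * l ^ 2 = 1 := by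
        rw [← h2]
        linear_combination h1
      have h4 : ι P ^ (-k) * ι P ^ k = 1 := by
        rw [← zpow_add₀ hx]
        simp
      calc l ^ 2 = (ι P ^ (-k) * ι P ^ k) * l ^ 2 := by rw [h4, one_mul]
        _ = ι P ^ k * (ι P ^ (-k) * l ^ 2) := by ring
        _ = ι P ^ k := by rw [h3, mul_one]
  refine ⟨⟨fun ⟨l, hU⟩ => ⟨-(ι P ^ (m - k) * l), part2 l hU⟩, ?_⟩, part2, part3⟩
  rintro ⟨μ, hs⟩
  by_cases hx : ι P = 0
  · by_cases hmk : m - k = 0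
    · refine ⟨-μ, ?_⟩
      funext z
      have h := hTrp' z
      rw [congrFun hs z, hmk] at h
      simp only [zpow_zero, one_mul, Pi.smul_apply, smul_eq_mul] at h ⊢
      linear_combination h
    · exfalso
      have hmu : μ = 0 := by
        have h := hTrp' z0
        rw [congrFun hs z0, hx, _root_.zero_zpow (m - k) hmk] at h
        simp only [Pi.smul_apply, smul_eq_mul, zero_mul, neg_zero] at h
        exact (mul_eq_zero.mp h).resolve_right hz0
      have hs0 : slash ι k m Wp f = 0 := by rw [hs, hmu, zero_smul]
      have h := hTr' z0
      rw [hs0, heckeU_zero'] at h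
      simp at h
      exact hz0 h
  · refine ⟨-(ι P ^ (k - m) * μ), ?_⟩
    funext z
    have h := hTrp' z
    rw [congrFun hs z] at h
    simp only [Pi.smul_apply, smul_eq_mul] at h ⊢
    have hcan : ι P ^ (k - m) * ι P ^ (m - k) = 1 := by
      rw [← zpow_add₀ hx]
      have : k - m + (m - k) = 0 := by ring
      rw [this, zpow_zero]
    linear_combination (ι P ^ (k - m)) * h + (-(heckeU ι k m P f z)) * hcan
end
end
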